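/- arXiv:1710.06078 — 6 statements merged into one kernel-verified Lean document; each statement's English description precedes it below -/
import Mathlib

section
/- The softmax map σ: ℝ^K → ℝ^K defined by σ(r)_i = exp(r_i)/Σ_{j=1}^K exp(r_j) is Lipschitz with constant 1/2 with respect to the Euclidean norms: for all r, r' ∈ ℝ^K, ‖σ(r) − σ(r')‖_2 ≤ (1/2)‖r − r'‖_2. In particular, closeness of the log-ratio coordinates r, r' controls the Euclidean distance between the corresponding probability vectors. -/
open Finset

/-- The softmax map `σ(r)ᵢ = exp rᵢ / Σⱼ exp rⱼ` on `ℝ^K`. -/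
noncomputable def softmax {K : ℕ} (r : EuclideanSpace ℝ (Fin K)) :
    EuclideanSpace ℝ (Fin K) :=
  (WithLp.equiv 2 (Fin K → ℝ)).symm fun i => Real.exp (r i) / ∑ j, Real.exp (r j)


/-- Weighted variance bound: for a probability vector `p`,
`∑ pᵢ (vᵢ - E[v])² ≤ (1/2) ∑ vᵢ²`. -/
lemma sm_var_le {K : ℕ} (p v : Fin K → ℝ) (hp : ∀ i, 0 ≤ p i) (hs : ∑ i, p i = 1) :
    ∑ i, p i * (v i - ∑ j, p j * v j) ^ 2 ≤ (1 / 2) * ∑ i, v i ^ 2 := by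
  set s := ∑ j, p j * v j with hsdef
  set B := ∑ i, p i * v i ^ 2 with hBdef
  have hL : ∑ i, p i * (v i - s) ^ 2 = B - s ^ 2 := by
    have h1 : ∀ i ∈ univ, p i * (v i - s) ^ 2
        = p i * v i ^ 2 - (2 * s) * (p i * v i) + (s ^ 2) * p i := fun i _ => by ring
    rw [Finset.sum_congr rfl h1]
    rw [Finset.sum_add_distrib, Finset.sum_sub_distrib, ← Finset.mul_sum, ← Finset.mul_sum,
      ← hsdef, hs, ← hBdef]
    ring
  rw [hL]
  -- double sum identity: ∑ᵢ∑ⱼ pᵢpⱼ(vᵢ-vⱼ)² = 2B - 2s²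
  have hdouble : ∑ i, ∑ j, p i * p j * (v i - v j) ^ 2 = 2 * B - 2 * s ^ 2 := by
    have h1 : ∀ i ∈ univ, ∑ j, p i * p j * (v i - v j) ^ 2
        = p i * v i ^ 2 - (2 * (p i * v i)) * s + p i * B := by
      intro i _
      have h2 : ∀ j ∈ univ, p i * p j * (v i - v j) ^ 2
          = (p i * v i ^ 2) * p j - (2 * (p i * v i)) * (p j * v j) + p i * (p j * v j ^ 2) :=
        fun j _ => by ring
      rw [Finset.sum_congr rfl h2]
      rw [Finset.sum_add_distrib, Finset.sum_sub_distrib, ← Finset.mul_sum, ← Finset.mul_sum,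
        ← Finset.mul_sum, hs, ← hsdef, ← hBdef]
      ring
    rw [Finset.sum_congr rfl h1]
    rw [Finset.sum_add_distrib, Finset.sum_sub_distrib, ← Finset.sum_mul, ← Finset.sum_mul,
      ← hBdef]
    have h3 : ∑ i, 2 * (p i * v i) = 2 * s := by rw [← Finset.mul_sum, ← hsdef]
    rw [h3, hs]
    ring
  -- termwise bound for the double sum
  have hterm : ∑ i, ∑ j, p i * p j * (v i - v j) ^ 2
      ≤ ∑ i, ∑ j, (2 * (p i * p j) * (v i ^ 2 + v j ^ 2)
        - (if i = j then 4 * p i ^ 2 * v i ^ 2 else 0)) := by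
    apply Finset.sum_le_sum; intro i _
    apply Finset.sum_le_sum; intro j _
    by_cases h : i = j
    · subst h; simp; exact le_of_eq (by ring)
    · simp only [h, if_false, sub_zero]
      nlinarith [mul_nonneg (hp i) (hp j), sq_nonneg (v i + v j)]
  have hRHS : ∑ i, ∑ j, (2 * (p i * p j) * (v i ^ 2 + v j ^ 2)
      - (if i = j then 4 * p i ^ 2 * v i ^ 2 else 0))
      = 4 * B - 4 * ∑ i, p i ^ 2 * v i ^ 2 := by
    have h1 : ∀ i ∈ univ, ∑ j, (2 * (p i * p j) * (v i ^ 2 + v j ^ 2)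
        - (if i = j then 4 * p i ^ 2 * v i ^ 2 else 0))
        = 2 * p i * v i ^ 2 + 2 * p i * B - 4 * p i ^ 2 * v i ^ 2 := by
      intro i _
      rw [Finset.sum_sub_distrib]
      have h2 : ∀ j ∈ univ, 2 * (p i * p j) * (v i ^ 2 + v j ^ 2)
          = (2 * p i * v i ^ 2) * p j + (2 * p i) * (p j * v j ^ 2) := fun j _ => by ring
      rw [Finset.sum_congr rfl h2, Finset.sum_add_distrib, ← Finset.mul_sum, ← Finset.mul_sum,
        hs, ← hBdef]
      rw [Finset.sum_ite_eq univ i (fun _ => 4 * p i ^ 2 * v i ^ 2)]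
      simp
    rw [Finset.sum_congr rfl h1]
    rw [Finset.sum_sub_distrib, Finset.sum_add_distrib, ← Finset.sum_mul]
    have h3 : ∑ i, 2 * p i * v i ^ 2 = 2 * B := by
      rw [hBdef, Finset.mul_sum]; exact Finset.sum_congr rfl fun i _ => by ring
    have h4 : ∑ i, 2 * p i = 2 := by rw [← Finset.mul_sum, hs]; norm_num
    rw [h3, h4]
    have h5 : ∑ i, 4 * p i ^ 2 * v i ^ 2 = 4 * ∑ i, p i ^ 2 * v i ^ 2 := by
      rw [Finset.mul_sum]; exact Finset.sum_congr rfl fun i _ => by ring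
    rw [h5]; ring
  have hfinal : 4 * B - 4 * ∑ i, p i ^ 2 * v i ^ 2 ≤ ∑ i, v i ^ 2 := by
    have h1 : ∑ i, (4 * (p i * v i ^ 2) - 4 * (p i ^ 2 * v i ^ 2)) ≤ ∑ i, v i ^ 2 := by
      apply Finset.sum_le_sum; intro i _
      nlinarith [sq_nonneg (2 * p i - 1), sq_nonneg (v i), hp i]
    calc 4 * B - 4 * ∑ i, p i ^ 2 * v i ^ 2
        = ∑ i, (4 * (p i * v i ^ 2) - 4 * (p i ^ 2 * v i ^ 2)) := by
          rw [Finset.sum_sub_distrib, ← Finset.mul_sum, ← Finset.mul_sum, hBdef]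
      _ ≤ ∑ i, v i ^ 2 := h1
  nlinarith [hdouble ▸ (hterm.trans_eq hRHS), hfinal]

/-- Key operator bound: `∑ (pᵢ(vᵢ - E[v]))² ≤ (1/4) ∑ vᵢ²`. -/
lemma sm_key {K : ℕ} (p v : Fin K → ℝ) (hp : ∀ i, 0 ≤ p i) (hs : ∑ i, p i = 1) :
    ∑ i, (p i * (v i - ∑ j, p j * v j)) ^ 2 ≤ (1 / 4) * ∑ i, v i ^ 2 := by
  set s := ∑ j, p j * v j with hsdef
  set w : Fin K → ℝ := fun i => p i * (v i - s) with hw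
  set sw := ∑ j, p j * w j with hswdef
  set T := ∑ i, w i ^ 2 with hT
  set V := ∑ i, v i ^ 2 with hV
  have hTnn : 0 ≤ T := Finset.sum_nonneg fun i _ => sq_nonneg _
  have hVnn : 0 ≤ V := Finset.sum_nonneg fun i _ => sq_nonneg _
  -- ∑ p i (v i - s) = 0
  have h0 : ∑ i, p i * (v i - s) = 0 := by
    have : ∀ i ∈ univ, p i * (v i - s) = p i * v i - s * p i := fun i _ => by ring
    rw [Finset.sum_congr rfl this, Finset.sum_sub_distrib, ← Finset.mul_sum, hs, ← hsdef]
    ring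
  -- T = covariance form
  have hTeq : ∑ i, p i * (w i - sw) * (v i - s) = T := by
    have hexp : ∀ i ∈ univ, p i * (w i - sw) * (v i - s)
        = w i * (p i * (v i - s)) - sw * (p i * (v i - s)) := fun i _ => by ring
    rw [Finset.sum_congr rfl hexp, Finset.sum_sub_distrib, ← Finset.mul_sum, h0, mul_zero,
      sub_zero, hT]
    exact Finset.sum_congr rfl fun i _ => by rw [hw]; ring
  -- Cauchy–Schwarz
  have hCS : (∑ i, p i * (w i - sw) * (v i - s)) ^ 2
      ≤ (∑ i, p i * (w i - sw) ^ 2) * (∑ i, p i * (v i - s) ^ 2) := by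
    have := Finset.sum_mul_sq_le_sq_mul_sq univ
      (fun i => Real.sqrt (p i) * (w i - sw)) (fun i => Real.sqrt (p i) * (v i - s))
    have e1 : ∀ i ∈ univ, (Real.sqrt (p i) * (w i - sw)) * (Real.sqrt (p i) * (v i - s))
        = p i * (w i - sw) * (v i - s) := by
      intro i _
      rw [show (Real.sqrt (p i) * (w i - sw)) * (Real.sqrt (p i) * (v i - s))
        = (Real.sqrt (p i) * Real.sqrt (p i)) * ((w i - sw) * (v i - s)) from by ring,
        Real.mul_self_sqrt (hp i)]
      ring
    have e2 : ∀ i ∈ univ, (Real.sqrt (p i) * (w i - sw)) ^ 2 = p i * (w i - sw) ^ 2 := by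
      intro i _
      rw [mul_pow, Real.sq_sqrt (hp i)]
    have e3 : ∀ i ∈ univ, (Real.sqrt (p i) * (v i - s)) ^ 2 = p i * (v i - s) ^ 2 := by
      intro i _
      rw [mul_pow, Real.sq_sqrt (hp i)]
    rw [Finset.sum_congr rfl e1, Finset.sum_congr rfl e2, Finset.sum_congr rfl e3] at this
    exact this
  have hvarw : ∑ i, p i * (w i - sw) ^ 2 ≤ (1 / 2) * T := sm_var_le p w hp hs
  have hvarv : ∑ i, p i * (v i - s) ^ 2 ≤ (1 / 2) * V := sm_var_le p v hp hs
  have hvw : 0 ≤ ∑ i, p i * (w i - sw) ^ 2 :=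
    Finset.sum_nonneg fun i _ => mul_nonneg (hp i) (sq_nonneg _)
  have hvv : 0 ≤ ∑ i, p i * (v i - s) ^ 2 :=
    Finset.sum_nonneg fun i _ => mul_nonneg (hp i) (sq_nonneg _)
  have hT2 : T ^ 2 ≤ (1 / 4) * (T * V) := by
    calc T ^ 2 = (∑ i, p i * (w i - sw) * (v i - s)) ^ 2 := by rw [hTeq]
      _ ≤ (∑ i, p i * (w i - sw) ^ 2) * (∑ i, p i * (v i - s) ^ 2) := hCS
      _ ≤ ((1 / 2) * T) * ((1 / 2) * V) := by
          apply mul_le_mul hvarw hvarv hvv (by linarith)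
      _ = (1 / 4) * (T * V) := by ring
  -- conclude T ≤ (1/4) V
  show T ≤ 1 / 4 * V
  rcases eq_or_lt_of_le hTnn with h | h
  · linarith
  · nlinarith

/-- The softmax Jacobian as a continuous linear map on `Fin K → ℝ`. -/
noncomputable def smDP {K : ℕ} (p : Fin K → ℝ) : (Fin K → ℝ) →L[ℝ] (Fin K → ℝ) :=
  ContinuousLinearMap.pi fun i =>
    p i • ContinuousLinearMap.proj i
      - p i • (∑ j, p j • (ContinuousLinearMap.proj j : (Fin K → ℝ) →L[ℝ] ℝ))

lemma smDP_apply {K : ℕ} (p : Fin K → ℝ) (v : Fin K → ℝ) (i : Fin K) :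
    smDP p v i = p i * (v i - ∑ j, p j * v j) := by
  simp [smDP, ContinuousLinearMap.sum_apply, mul_sub]

lemma smF_hasFDerivAt {K : ℕ} (hK : 0 < K) (y : Fin K → ℝ) :
    HasFDerivAt (fun z : Fin K → ℝ => fun i => Real.exp (z i) / ∑ j, Real.exp (z j))
      (smDP fun i => Real.exp (y i) / ∑ j, Real.exp (y j)) y := by
  have hne : (univ : Finset (Fin K)).Nonempty := univ_nonempty_iff.2 (Fin.pos_iff_nonempty.1 hK)
  have hS : (0 : ℝ) < ∑ j, Real.exp (y j) :=
    Finset.sum_pos (fun j _ => Real.exp_pos _) hne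
  set S := ∑ j, Real.exp (y j) with hSdef
  set B : (Fin K → ℝ) →L[ℝ] ℝ :=
    ∑ j, Real.exp (y j) • (ContinuousLinearMap.proj j : (Fin K → ℝ) →L[ℝ] ℝ) with hB
  apply hasFDerivAt_pi''
  intro i
  have hnum : HasFDerivAt (fun z : Fin K → ℝ => Real.exp (z i))
      (Real.exp (y i) • (ContinuousLinearMap.proj i : (Fin K → ℝ) →L[ℝ] ℝ)) y :=
    HasDerivAt.comp_hasFDerivAt (f := fun z : Fin K → ℝ => z i) y (Real.hasDerivAt_exp (y i)) (hasFDerivAt_apply i y)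
  have hden : HasFDerivAt (fun z : Fin K → ℝ => ∑ j, Real.exp (z j)) B y := by
    rw [hB]
    exact HasFDerivAt.fun_sum fun j _ =>
      HasDerivAt.comp_hasFDerivAt (f := fun z : Fin K → ℝ => z j) y (Real.hasDerivAt_exp (y j)) (hasFDerivAt_apply j y)
  have hinv : HasFDerivAt (fun z : Fin K → ℝ => (∑ j, Real.exp (z j))⁻¹)
      (-((S ^ 2)⁻¹ • B)) y := by
    have := (hasDerivAt_inv hS.ne').comp_hasFDerivAt y hden
    simpa [neg_smul, Function.comp_def] using this
  have hmul := hnum.mul hinv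
  have heq : (ContinuousLinearMap.proj i).comp
        (smDP fun i => Real.exp (y i) / ∑ j, Real.exp (y j))
      = Real.exp (y i) • (-((S ^ 2)⁻¹ • B))
        + (∑ j, Real.exp (y j))⁻¹ • (Real.exp (y i) • (ContinuousLinearMap.proj i : (Fin K → ℝ) →L[ℝ] ℝ)) := by
    ext v
    simp only [ContinuousLinearMap.comp_apply, ContinuousLinearMap.proj_apply,
      ContinuousLinearMap.add_apply, ContinuousLinearMap.smul_apply, smDP_apply, hB,
      ContinuousLinearMap.sum_apply, smul_eq_mul, ContinuousLinearMap.neg_apply, ← hSdef]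
    rw [Finset.mul_sum]
    have hsum : ∑ j, Real.exp (y j) / S * v j = (∑ j, Real.exp (y j) * v j) / S := by
      rw [Finset.sum_div]
      exact Finset.sum_congr rfl fun j _ => by ring
    rw [hsum]
    field_simp
    rw [← Finset.sum_div]
    field_simp
    ring
  rw [heq]
  have hfun : (fun z : Fin K → ℝ => Real.exp (z i) / ∑ j, Real.exp (z j))
      = fun z : Fin K → ℝ => Real.exp (z i) * (∑ j, Real.exp (z j))⁻¹ := by
    funext z; rw [div_eq_mul_inv]
  rw [hfun]
  exact hmul

section E
variable {K : ℕ}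

noncomputable def eL (K : ℕ) : EuclideanSpace ℝ (Fin K) ≃L[ℝ] (Fin K → ℝ) :=
  PiLp.continuousLinearEquiv 2 ℝ (fun _ : Fin K => ℝ)

/-- The softmax Jacobian as a map on Euclidean space. -/
noncomputable def smD (K : ℕ) (x : EuclideanSpace ℝ (Fin K)) :
    EuclideanSpace ℝ (Fin K) →L[ℝ] EuclideanSpace ℝ (Fin K) :=
  (((eL K).symm : (Fin K → ℝ) →L[ℝ] EuclideanSpace ℝ (Fin K)).comp
    (smDP fun i => Real.exp (x i) / ∑ j, Real.exp (x j))).comp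
    ((eL K : EuclideanSpace ℝ (Fin K) →L[ℝ] (Fin K → ℝ)))

lemma softmax_hasFDerivAt (hK : 0 < K) (x : EuclideanSpace ℝ (Fin K)) :
    HasFDerivAt softmax (smD K x) x := by
  have h1 := smF_hasFDerivAt hK ((eL K) x)
  have h2 := (h1.comp x ((eL K : EuclideanSpace ℝ (Fin K) →L[ℝ] (Fin K → ℝ)).hasFDerivAt))
  have h3 := (((eL K).symm : (Fin K → ℝ) →L[ℝ] EuclideanSpace ℝ (Fin K)).hasFDerivAt).comp x h2
  exact h3

lemma smD_norm_le (x : EuclideanSpace ℝ (Fin K)) (hK : 0 < K) : ‖smD K x‖ ≤ 1 / 2 := by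
  have hne : (univ : Finset (Fin K)).Nonempty := univ_nonempty_iff.2 (Fin.pos_iff_nonempty.1 hK)
  have hS : (0 : ℝ) < ∑ j, Real.exp (x j) :=
    Finset.sum_pos (fun j _ => Real.exp_pos _) hne
  set p : Fin K → ℝ := fun i => Real.exp (x i) / ∑ j, Real.exp (x j) with hp
  have hpnn : ∀ i, 0 ≤ p i := fun i => div_nonneg (Real.exp_pos _).le hS.le
  have hpsum : ∑ i, p i = 1 := by
    rw [hp, ← Finset.sum_div, div_self hS.ne']
  apply ContinuousLinearMap.opNorm_le_bound _ (by norm_num)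
  intro v
  have happ : ∀ i, smD K x v i = p i * (v i - ∑ j, p j * v j) := fun i => smDP_apply p _ i
  rw [EuclideanSpace.norm_eq, EuclideanSpace.norm_eq]
  have hsum : ∑ i, ‖smD K x v i‖ ^ 2 = ∑ i, (p i * (v i - ∑ j, p j * v j)) ^ 2 := by
    refine Finset.sum_congr rfl fun i _ => ?_
    rw [happ i, Real.norm_eq_abs, sq_abs]
  rw [hsum]
  have hkey := sm_key p (fun i => v i) hpnn hpsum
  have hv : ∑ i, ‖v i‖ ^ 2 = ∑ i, v i ^ 2 := by
    refine Finset.sum_congr rfl fun i _ => by rw [Real.norm_eq_abs, sq_abs]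
  rw [hv]
  calc Real.sqrt (∑ i, (p i * (v i - ∑ j, p j * v j)) ^ 2)
      ≤ Real.sqrt ((1 / 4) * ∑ i, v i ^ 2) := Real.sqrt_le_sqrt hkey
    _ = (1 / 2) * Real.sqrt (∑ i, v i ^ 2) := by
        rw [show (1 / 4 : ℝ) = (1 / 2) ^ 2 by norm_num, Real.sqrt_mul (by positivity),
          Real.sqrt_sq (by norm_num)]

end E

/-- The softmax map is `1/2`-Lipschitz with respect to the Euclidean norms:
`‖σ(r) − σ(r')‖₂ ≤ (1/2) ‖r − r'‖₂` for all `r, r' ∈ ℝ^K`. -/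
theorem softmax_lipschitz_half {K : ℕ} (r r' : EuclideanSpace ℝ (Fin K)) :
    ‖softmax r - softmax r'‖ ≤ (1 / 2) * ‖r - r'‖ := by
  rcases Nat.eq_zero_or_pos K with hK | hK
  · subst hK
    have : softmax r - softmax r' = 0 := Subsingleton.elim _ _
    rw [this, norm_zero]
    positivity
  · have := (convex_univ : Convex ℝ (Set.univ : Set (EuclideanSpace ℝ (Fin K)))).norm_image_sub_le_of_norm_hasFDerivWithin_le
      (f := softmax) (f' := smD K)
      (fun x _ => (softmax_hasFDerivAt hK x).hasFDerivWithinAt)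
      (fun x _ => smD_norm_le x hK)
      (Set.mem_univ r') (Set.mem_univ r)
    simpa using this
end

section
/- For every entrywise positive K×K real matrix M, the Birkhoff contraction coefficient satisfies τ(M) < 1; consequently, for all entrywise positive row vectors x, y ∈ ℝ^K that are not positive scalar multiples of each other, d(xM, yM) ≤ τ(M) · d(x,y) < d(x,y), where d is the Hilbert projective metric. -/
/-- The Hilbert projective metric `d(x,y) = log ((max_i x_i/y_i) / (min_j x_j/y_j))`
for entrywise positive vectors in `ℝ^K`. -/
noncomputable def hilbertDist {K : ℕ} (x y : Fin K → ℝ) : ℝ :=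
  Real.log ((⨆ i, x i / y i) / (⨅ i, x i / y i))

/-- The Birkhoff contraction coefficient
`τ(M) = sup { d(xM, yM)/d(x,y) : x, y entrywise positive, d(x,y) > 0 }`. -/
noncomputable def birkhoff {K : ℕ} (M : Matrix (Fin K) (Fin K) ℝ) : ℝ :=
  sSup {t : ℝ | ∃ x y : Fin K → ℝ, (∀ i, 0 < x i) ∧ (∀ i, 0 < y i) ∧
    0 < hilbertDist x y ∧
    t = hilbertDist (Matrix.vecMul x M) (Matrix.vecMul y M) / hilbertDist x y}

open Finset

lemma vecMul_apply' {K : ℕ} (v : Fin K → ℝ) (M : Matrix (Fin K) (Fin K) ℝ) (j : Fin K) :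
    Matrix.vecMul v M j = ∑ i, v i * M i j := by
  simp [Matrix.vecMul, dotProduct]

lemma hd_repr {K : ℕ} (hK : 0 < K) (x y : Fin K → ℝ) :
    ∃ i0 i1 : Fin K, (∀ i, x i0 / y i0 ≤ x i / y i) ∧ (∀ i, x i / y i ≤ x i1 / y i1) ∧
      hilbertDist x y = Real.log ((x i1 / y i1) / (x i0 / y i0)) := by
  haveI : Nonempty (Fin K) := Fin.pos_iff_nonempty.mp hK
  obtain ⟨i0, h0⟩ := Finite.exists_min (fun i => x i / y i)
  obtain ⟨i1, h1⟩ := Finite.exists_max (fun i => x i / y i)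
  refine ⟨i0, i1, h0, h1, ?_⟩
  unfold hilbertDist
  rw [le_antisymm (ciSup_le h1)
        (le_ciSup (f := fun i => x i / y i) (Finite.bddAbove_range _) i1),
      le_antisymm (ciInf_le (f := fun i => x i / y i) (Finite.bddBelow_range _) i0)
        (le_ciInf h0)]

lemma scalar_key {ε r B R : ℝ} (hε0 : 0 < ε) (hε1 : ε ≤ 1) (hr : 0 < r)
    (hB0 : 0 ≤ B) (hBR : B ≤ R - r) :
    Real.log (r + B) - Real.log (r + ε ^ 2 * B) ≤
      (1 - ε ^ 2) * (Real.log R - Real.log r) := by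
  have hR : r ≤ R := by linarith
  have hRpos : 0 < R := lt_of_lt_of_le hr hR
  set σ := ε ^ 2 with hσ
  have hσ0 : 0 < σ := by positivity
  have hσ1 : σ ≤ 1 := by nlinarith
  have h1 : 0 < r + σ * B := by positivity
  have h2 : 0 < r + B := by positivity
  have h3 : 0 < r + σ * (R - r) := by nlinarith
  have step1 : Real.log (r + B) - Real.log (r + σ * B) ≤
      Real.log R - Real.log (r + σ * (R - r)) := by
    rw [← Real.log_div (ne_of_gt h2) (ne_of_gt h1),
        ← Real.log_div (ne_of_gt hRpos) (ne_of_gt h3)]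
    apply Real.log_le_log (by positivity)
    rw [div_le_div_iff₀ h1 h3]
    nlinarith [mul_nonneg (mul_nonneg hr.le (sub_nonneg.2 hσ1)) (sub_nonneg.2 hBR)]
  have step2 : Real.log R - Real.log (r + σ * (R - r)) ≤
      (1 - σ) * (Real.log R - Real.log r) := by
    have hgm : R ^ σ * r ^ (1 - σ) ≤ σ * R + (1 - σ) * r :=
      Real.geom_mean_le_arith_mean2_weighted hσ0.le (by linarith) hRpos.le hr.le (by ring)
    have hgm' : R ^ σ * r ^ (1 - σ) ≤ r + σ * (R - r) := by linarith
    have hlog : σ * Real.log R + (1 - σ) * Real.log r ≤ Real.log (r + σ * (R - r)) := by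
      have hpow : (0:ℝ) < R ^ σ * r ^ (1 - σ) := by positivity
      have := Real.log_le_log hpow hgm'
      rwa [Real.log_mul (by positivity) (by positivity), Real.log_rpow hRpos,
        Real.log_rpow hr] at this
    linarith
  linarith

lemma contract_key {K : ℕ} (hK : 0 < K) (M : Matrix (Fin K) (Fin K) ℝ)
    (hM : ∀ i j, 0 < M i j) {ε : ℝ} (hε0 : 0 < ε) (hε1 : ε ≤ 1)
    (hεM : ∀ i j k l : Fin K, ε * M k l ≤ M i j)
    (x y : Fin K → ℝ) (hx : ∀ i, 0 < x i) (hy : ∀ i, 0 < y i) :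
    hilbertDist (Matrix.vecMul x M) (Matrix.vecMul y M) ≤
      (1 - ε ^ 2) * hilbertDist x y := by
  haveI : Nonempty (Fin K) := Fin.pos_iff_nonempty.mp hK
  obtain ⟨i0, i1, h0, h1, hd⟩ := hd_repr hK x y
  set r := x i0 / y i0 with hrdef
  set R := x i1 / y i1 with hRdef
  have hr : 0 < r := div_pos (hx i0) (hy i0)
  have hRpos : 0 < R := div_pos (hx i1) (hy i1)
  have hrR : r ≤ R := h0 i1
  have hxy_lo : ∀ i, r * y i ≤ x i := fun i => by
    have := h0 i; rw [hrdef, le_div_iff₀ (hy i)] at this; linarith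
  have hxy_hi : ∀ i, x i ≤ R * y i := fun i => by
    have := h1 i; rw [hRdef, div_le_iff₀ (hy i)] at this; linarith
  set a : Fin K → ℝ := fun j => ∑ i, y i * M i j with ha
  set b : Fin K → ℝ := fun j => ∑ i, (x i - r * y i) * M i j with hb
  have hapos : ∀ j, 0 < a j :=
    fun j => Finset.sum_pos (fun i _ => mul_pos (hy i) (hM i j)) univ_nonempty
  have hbnn : ∀ j, 0 ≤ b j := fun j =>
    Finset.sum_nonneg fun i _ => mul_nonneg (by linarith [hxy_lo i]) (hM i j).le
  have hyM : ∀ j, Matrix.vecMul y M j = a j := fun j => vecMul_apply' y M j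
  have hxM : ∀ j, Matrix.vecMul x M j = b j + r * a j := by
    intro j
    have h2 : b j + r * a j = ∑ i, x i * M i j := by
      rw [hb, ha, Finset.mul_sum, ← Finset.sum_add_distrib]
      exact Finset.sum_congr rfl fun i _ => by ring
    rw [h2, vecMul_apply']
  have hb_hi : ∀ j, b j ≤ (R - r) * a j := by
    intro j
    rw [ha, Finset.mul_sum]
    apply Finset.sum_le_sum
    intro i _
    have := hxy_hi i
    nlinarith [hM i j, hy i]
  have hb_cross : ∀ j k, ε * b k ≤ b j := by
    intro j k
    rw [hb, Finset.mul_sum]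
    apply Finset.sum_le_sum
    intro i _
    have h := hεM i j i k
    have hci : 0 ≤ x i - r * y i := by linarith [hxy_lo i]
    nlinarith [hM i k]
  have ha_cross : ∀ j k, ε * a k ≤ a j := by
    intro j k
    rw [ha, Finset.mul_sum]
    apply Finset.sum_le_sum
    intro i _
    have h := hεM i j i k
    nlinarith [hy i, hM i k]
  obtain ⟨j0, j1, g0, g1, hd'⟩ := hd_repr hK (Matrix.vecMul x M) (Matrix.vecMul y M)
  set B := b j1 / a j1 with hBdef
  have hB0 : 0 ≤ B := div_nonneg (hbnn j1) (hapos j1).le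
  have hBR : B ≤ R - r := by
    rw [hBdef, div_le_iff₀ (hapos j1)]; exact hb_hi j1
  have hρ1 : Matrix.vecMul x M j1 / Matrix.vecMul y M j1 = r + B := by
    rw [hxM, hyM, hBdef]; field_simp [ne_of_gt (hapos j1)]; try ring
  have hρ0lo : r + ε ^ 2 * B ≤ Matrix.vecMul x M j0 / Matrix.vecMul y M j0 := by
    rw [hxM, hyM]
    have key : ε ^ 2 * b j1 * a j0 ≤ b j0 * a j1 := by
      have hc1 := hb_cross j0 j1
      have hc2 := ha_cross j1 j0
      nlinarith [mul_le_mul hc1 hc2 (mul_pos hε0 (hapos j0)).le (hbnn j0)]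
    have h5 : ε ^ 2 * B ≤ b j0 / a j0 := by
      rw [hBdef, ← mul_div_assoc, div_le_div_iff₀ (hapos j1) (hapos j0)]
      exact key
    have heq : (b j0 + r * a j0) / a j0 = r + b j0 / a j0 := by
      field_simp [ne_of_gt (hapos j0)]
      try ring
    rw [heq]; linarith
  have hpos0 : 0 < r + ε ^ 2 * B := by positivity
  have hρ0pos : 0 < Matrix.vecMul x M j0 / Matrix.vecMul y M j0 :=
    lt_of_lt_of_le hpos0 hρ0lo
  have hρ1pos : 0 < Matrix.vecMul x M j1 / Matrix.vecMul y M j1 := by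
    rw [hρ1]; positivity
  rw [hd', hd, Real.log_div (ne_of_gt hρ1pos) (ne_of_gt hρ0pos),
      Real.log_div (ne_of_gt hRpos) (ne_of_gt hr)]
  have hstep : Real.log (Matrix.vecMul x M j1 / Matrix.vecMul y M j1) -
      Real.log (Matrix.vecMul x M j0 / Matrix.vecMul y M j0) ≤
      Real.log (r + B) - Real.log (r + ε ^ 2 * B) := by
    rw [hρ1]
    have := Real.log_le_log hpos0 hρ0lo
    linarith
  calc _ ≤ Real.log (r + B) - Real.log (r + ε ^ 2 * B) := hstep
    _ ≤ (1 - ε ^ 2) * (Real.log R - Real.log r) := scalar_key hε0 hε1 hr hB0 hBR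

/-- For every entrywise positive matrix `M`, the Birkhoff contraction coefficient
satisfies `τ(M) < 1`, and for positive vectors `x, y` that are not positive scalar
multiples of each other, `d(xM, yM) ≤ τ(M) d(x,y) < d(x,y)`. -/
theorem birkhoff_lt_one_and_contracts
    {K : ℕ} (hK : 0 < K)
    (M : Matrix (Fin K) (Fin K) ℝ) (hM_pos : ∀ i j, 0 < M i j) :
    birkhoff M < 1 ∧
      ∀ x y : Fin K → ℝ, (∀ i, 0 < x i) → (∀ i, 0 < y i) →
        (¬ ∃ c : ℝ, 0 < c ∧ x = c • y) →
        hilbertDist (Matrix.vecMul x M) (Matrix.vecMul y M) ≤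
            birkhoff M * hilbertDist x y ∧
          birkhoff M * hilbertDist x y < hilbertDist x y := by
  haveI : Nonempty (Fin K) := Fin.pos_iff_nonempty.mp hK
  obtain ⟨p0, hmin⟩ := Finite.exists_min (fun p : Fin K × Fin K => M p.1 p.2)
  obtain ⟨p1, hmax⟩ := Finite.exists_max (fun p : Fin K × Fin K => M p.1 p.2)
  set ε := M p0.1 p0.2 / M p1.1 p1.2 with hεdef
  have hε0 : 0 < ε := div_pos (hM_pos _ _) (hM_pos _ _)
  have hε1 : ε ≤ 1 := div_le_one_of_le₀ (hmin p1) (hM_pos _ _).le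
  have hεM : ∀ i j k l : Fin K, ε * M k l ≤ M i j := by
    intro i j k l
    have h1 : M k l ≤ M p1.1 p1.2 := hmax (k, l)
    have h2 : M p0.1 p0.2 ≤ M i j := hmin (i, j)
    rw [hεdef, div_mul_eq_mul_div, div_le_iff₀ (hM_pos p1.1 p1.2)]
    nlinarith [hM_pos k l, hM_pos p0.1 p0.2]
  set τ := 1 - ε ^ 2 with hτdef
  have hτ1 : τ < 1 := by nlinarith
  have hτ0 : 0 ≤ τ := by nlinarith
  have hkey := contract_key hK M hM_pos hε0 hε1 hεM
  -- positivity of the distance for non-proportional vectors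
  have hdpos : ∀ x y : Fin K → ℝ, (∀ i, 0 < x i) → (∀ i, 0 < y i) →
      (¬ ∃ c : ℝ, 0 < c ∧ x = c • y) → 0 < hilbertDist x y := by
    intro x y hx hy hns
    obtain ⟨i0, i1, h0, h1, hd⟩ := hd_repr hK x y
    have hr : 0 < x i0 / y i0 := div_pos (hx i0) (hy i0)
    have hrR : x i0 / y i0 ≤ x i1 / y i1 := h0 i1
    have hquot : 1 ≤ (x i1 / y i1) / (x i0 / y i0) := (one_le_div hr).2 hrR
    rcases lt_or_eq_of_le hquot with hlt | heqq
    · rw [hd]; exact Real.log_pos hlt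
    · exfalso
      apply hns
      refine ⟨x i0 / y i0, hr, funext fun i => ?_⟩
      have hRr : x i1 / y i1 = x i0 / y i0 :=
        (div_eq_one_iff_eq (ne_of_gt hr)).1 heqq.symm
      have hle : x i / y i ≤ x i0 / y i0 := hRr ▸ h1 i
      have heq2 : x i / y i = x i0 / y i0 := le_antisymm hle (h0 i)
      have : x i = (x i0 / y i0) * y i := by
        rw [← heq2]; exact (div_mul_cancel₀ _ (ne_of_gt (hy i))).symm
      simpa [Pi.smul_apply, smul_eq_mul] using this
  set S := {t : ℝ | ∃ x y : Fin K → ℝ, (∀ i, 0 < x i) ∧ (∀ i, 0 < y i) ∧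
    0 < hilbertDist x y ∧
    t = hilbertDist (Matrix.vecMul x M) (Matrix.vecMul y M) / hilbertDist x y} with hS
  have hSle : ∀ t ∈ S, t ≤ τ := by
    rintro t ⟨x, y, hx, hy, hd, rfl⟩
    rw [div_le_iff₀ hd]
    exact hkey x y hx hy
  have hbdd : BddAbove S := ⟨τ, hSle⟩
  have hbsup : birkhoff M ≤ τ := Real.sSup_le hSle hτ0
  have hb1 : birkhoff M < 1 := lt_of_le_of_lt hbsup hτ1
  refine ⟨hb1, fun x y hx hy hns => ?_⟩
  have hd := hdpos x y hx hy hns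
  have hmem : hilbertDist (Matrix.vecMul x M) (Matrix.vecMul y M) / hilbertDist x y ∈ S :=
    ⟨x, y, hx, hy, hd, rfl⟩
  have hle : hilbertDist (Matrix.vecMul x M) (Matrix.vecMul y M) / hilbertDist x y ≤
      birkhoff M := le_csSup hbdd hmem
  constructor
  · have := mul_le_mul_of_nonneg_right hle hd.le
    rwa [div_mul_cancel₀ _ (ne_of_gt hd)] at this
  · have := mul_lt_mul_of_pos_right hb1 hd
    simpa using this
end

section
/- (Birkhoff's formula.) For every entrywise positive K×K real matrix M, the Birkhoff contraction coefficient satisfies τ(M) = (1 − √φ(M))/(1 + √φ(M)), where φ(M) = min_{p,q,r,s} (M_{pq} M_{rs})/(M_{rq} M_{ps}) is the minimum of the cross ratios over all quadruples of indices. -/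
open Finset Filter Real

namespace BirkhoffAux


variable {K : ℕ}

lemma exists_eq_ciSup [Nonempty (Fin K)] (f : Fin K → ℝ) : ∃ j, (⨆ i, f i) = f j := by
  obtain ⟨j, hj⟩ := Finite.exists_max f
  exact ⟨j, le_antisymm (ciSup_le hj) (le_ciSup (Set.Finite.bddAbove (Set.finite_range f)) j)⟩

lemma exists_eq_ciInf [Nonempty (Fin K)] (f : Fin K → ℝ) : ∃ j, (⨅ i, f i) = f j := by
  obtain ⟨j, hj⟩ := Finite.exists_min f
  exact ⟨j, le_antisymm (ciInf_le (Set.Finite.bddBelow (Set.finite_range f)) j) (le_ciInf hj)⟩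

lemma le_sup' [Nonempty (Fin K)] (f : Fin K → ℝ) (j : Fin K) : f j ≤ ⨆ i, f i :=
  le_ciSup (Set.Finite.bddAbove (Set.finite_range f)) j

lemma inf_le' [Nonempty (Fin K)] (f : Fin K → ℝ) (j : Fin K) : (⨅ i, f i) ≤ f j :=
  ciInf_le (Set.Finite.bddBelow (Set.finite_range f)) j

lemma inf_pos [Nonempty (Fin K)] {f : Fin K → ℝ} (hf : ∀ i, 0 < f i) : 0 < ⨅ i, f i := by
  obtain ⟨j, hj⟩ := exists_eq_ciInf f
  rw [hj]; exact hf j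

lemma sup_pos [Nonempty (Fin K)] {f : Fin K → ℝ} (hf : ∀ i, 0 < f i) : 0 < ⨆ i, f i := by
  obtain ⟨j, hj⟩ := exists_eq_ciSup f
  rw [hj]; exact hf j



lemma key_cleared {p₁ p₂ q₁ q₂ e s : ℝ} (hp₁ : 0 < p₁) (hp₂ : 0 < p₂) (hq₁ : 0 < q₁)
    (hq₂ : 0 < q₂) (he0 : 0 ≤ e) (he1 : e ≤ 1) (hcross : e ^ 2 * (p₂ * q₁) ≤ p₁ * q₂)
    (hs : 0 < s) :
    s * (p₂ * q₁ - p₁ * q₂) * (1 + e) ≤ (1 - e) * ((p₁ + s * p₂) * (q₁ + s * q₂)) := by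
  set f := Real.sqrt (p₁ * q₁) with hfdef
  set g := Real.sqrt (p₂ * q₂) with hgdef
  have hf : f ^ 2 = p₁ * q₁ := Real.sq_sqrt (by positivity)
  have hg : g ^ 2 = p₂ * q₂ := Real.sq_sqrt (by positivity)
  have hf0 : 0 ≤ f := Real.sqrt_nonneg _
  have hg0 : 0 ≤ g := Real.sqrt_nonneg _
  have hfg : e * (p₂ * q₁) ≤ f * g := by
    have h2 : (e * (p₂ * q₁)) ^ 2 ≤ (f * g) ^ 2 := by
      have h5 := mul_le_mul_of_nonneg_right hcross (le_of_lt (by positivity : (0:ℝ) < p₂ * q₁))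
      nlinarith [hf, hg]
    have h3 : 0 ≤ e * (p₂ * q₁) := by positivity
    exact (pow_le_pow_iff_left₀ h3 (by positivity) (by norm_num)).mp h2
  have hsq : 0 ≤ p₁ * q₁ - 2 * s * (f * g) + s ^ 2 * (p₂ * q₂) := by
    nlinarith [sq_nonneg (f - s * g), hf, hg]
  nlinarith [mul_nonneg (sub_nonneg.2 he1) hsq,
    mul_nonneg (mul_nonneg hs.le (sub_nonneg.2 he1)) (sub_nonneg.2 hfg),
    mul_nonneg hs.le (sub_nonneg.2 hcross)]

lemma deriv_key {p₁ p₂ q₁ q₂ e s : ℝ} (hp₁ : 0 < p₁) (hp₂ : 0 < p₂) (hq₁ : 0 < q₁)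
    (hq₂ : 0 < q₂) (he0 : 0 ≤ e) (he1 : e ≤ 1) (hcross : e ^ 2 * (p₂ * q₁) ≤ p₁ * q₂)
    (hs : 0 < s) :
    0 ≤ (1 - e) / (1 + e) * s⁻¹ + (q₁ + s * q₂)⁻¹ * q₂ - (p₁ + s * p₂)⁻¹ * p₂ := by
  have h1e : (0:ℝ) < 1 + e := by linarith
  have hdp : 0 < p₁ + s * p₂ := by positivity
  have hdq : 0 < q₁ + s * q₂ := by positivity
  set τ := (1 - e) / (1 + e) with hτdef
  have hτ : τ * (1 + e) = 1 - e := div_mul_cancel₀ _ h1e.ne'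
  have key := key_cleared hp₁ hp₂ hq₁ hq₂ he0 he1 hcross hs
  rw [← hτ] at key
  have h' : s * (p₂ * q₁ - p₁ * q₂) ≤ τ * ((p₁ + s * p₂) * (q₁ + s * q₂)) := by
    nlinarith [key]
  have goal' : p₂ / (p₁ + s * p₂) ≤ τ / s + q₂ / (q₁ + s * q₂) := by
    rw [div_add_div _ _ hs.ne' hdq.ne', div_le_div_iff₀ hdp (by positivity)]
    nlinarith [h']
  have := sub_nonneg.2 goal'
  calc (0:ℝ) ≤ τ / s + q₂ / (q₁ + s * q₂) - p₂ / (p₁ + s * p₂) := this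
    _ = τ * s⁻¹ + (q₁ + s * q₂)⁻¹ * q₂ - (p₁ + s * p₂)⁻¹ * p₂ := by
        rw [div_eq_mul_inv, div_eq_mul_inv, div_eq_mul_inv]; ring



lemma gderiv {p₁ p₂ q₁ q₂ τ s : ℝ} (hdp : 0 < p₁ + s * p₂) (hdq : 0 < q₁ + s * q₂)
    (hs : 0 < s) :
    HasDerivAt (fun u => τ * Real.log u + Real.log (q₁ + u * q₂) - Real.log (p₁ + u * p₂))
      (τ * s⁻¹ + (q₁ + s * q₂)⁻¹ * q₂ - (p₁ + s * p₂)⁻¹ * p₂) s := by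
  have H1 : HasDerivAt (fun u : ℝ => τ * Real.log u) (τ * s⁻¹) s :=
    (Real.hasDerivAt_log hs.ne').const_mul τ
  have H2 : HasDerivAt (fun u : ℝ => q₁ + u * q₂) q₂ s := by
    simpa using (hasDerivAt_mul_const q₂).const_add q₁
  have H3 : HasDerivAt (fun u : ℝ => Real.log (q₁ + u * q₂)) ((q₁ + s * q₂)⁻¹ * q₂) s :=
    by have h := (Real.hasDerivAt_log hdq.ne').comp s H2; exact h
  have H4 : HasDerivAt (fun u : ℝ => p₁ + u * p₂) p₂ s := by
    simpa using (hasDerivAt_mul_const p₂).const_add p₁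
  have H5 : HasDerivAt (fun u : ℝ => Real.log (p₁ + u * p₂)) ((p₁ + s * p₂)⁻¹ * p₂) s :=
    by have h := (Real.hasDerivAt_log hdp.ne').comp s H4; exact h
  exact (H1.add H3).sub H5

lemma lemmaA {p₁ p₂ q₁ q₂ e t : ℝ} (hp₁ : 0 < p₁) (hp₂ : 0 < p₂) (hq₁ : 0 < q₁) (hq₂ : 0 < q₂)
    (he0 : 0 ≤ e) (he1 : e ≤ 1) (hcross : e ^ 2 * (p₂ * q₁) ≤ p₁ * q₂) (ht : 1 < t) :
    (p₁ + t * p₂) * (q₁ + q₂) ≤ t ^ ((1 - e) / (1 + e)) * ((p₁ + p₂) * (q₁ + t * q₂)) := by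
  set τ := (1 - e) / (1 + e) with hτdef
  set g : ℝ → ℝ := fun u => τ * Real.log u + Real.log (q₁ + u * q₂) - Real.log (p₁ + u * p₂)
    with hgdef
  have hdp : ∀ s : ℝ, 0 < s → 0 < p₁ + s * p₂ := fun s hs => by positivity
  have hdq : ∀ s : ℝ, 0 < s → 0 < q₁ + s * q₂ := fun s hs => by positivity
  have hmono : MonotoneOn g (Set.Ici 1) := by
    apply monotoneOn_of_deriv_nonneg (convex_Ici 1)
    · intro s hs
      have hs0 : (0:ℝ) < s := lt_of_lt_of_le zero_lt_one hs
      exact (gderiv (hdp s hs0) (hdq s hs0) hs0).continuousAt.continuousWithinAt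
    · intro s hs
      rw [interior_Ici] at hs
      have hs0 : (0:ℝ) < s := lt_trans zero_lt_one hs
      exact (gderiv (hdp s hs0) (hdq s hs0) hs0).differentiableAt.differentiableWithinAt
    · intro s hs
      rw [interior_Ici] at hs
      have hs0 : (0:ℝ) < s := lt_trans zero_lt_one hs
      rw [(gderiv (hdp s hs0) (hdq s hs0) hs0).deriv]
      exact deriv_key hp₁ hp₂ hq₁ hq₂ he0 he1 hcross hs0
  have h01 : g 1 ≤ g t := hmono (Set.self_mem_Ici) (le_of_lt ht) (le_of_lt ht)
  simp only [hgdef, Real.log_one, mul_zero, one_mul, zero_add] at h01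
  -- h01 : log (q₁+q₂) - log (p₁+p₂) ≤ τ * log t + log (q₁+t*q₂) - log (p₁+t*p₂)
  have hL : Real.log ((p₁ + t * p₂) * (q₁ + q₂)) ≤
      Real.log (t ^ τ * ((p₁ + p₂) * (q₁ + t * q₂))) := by
    rw [Real.log_mul (by positivity) (by positivity),
      Real.log_mul (by positivity) (by positivity),
      Real.log_mul (by positivity) (by positivity),
      Real.log_rpow (lt_trans zero_lt_one ht)]
    linarith
  exact (Real.log_le_log_iff (by positivity) (by positivity)).mp hL



lemma core [Nonempty (Fin K)] {u v r : Fin K → ℝ} {a b e : ℝ}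
    (hu : ∀ i, 0 < u i) (hv : ∀ i, 0 < v i) (ha : 0 < a) (hab : a < b)
    (he0 : 0 ≤ e) (he1 : e ≤ 1)
    (hcross : ∀ i l, e ^ 2 * (u l * v i) ≤ u i * v l)
    (hr1 : ∀ i, a ≤ r i) (hr2 : ∀ i, r i ≤ b) :
    (∑ i, u i * r i) * (∑ i, v i) ≤
      (b / a) ^ ((1 - e) / (1 + e)) * ((∑ i, u i) * (∑ i, v i * r i)) := by
  classical
  set t := b / a with htdef
  have ht : 1 < t := (one_lt_div ha).mpr hab
  have ht0 : 0 < t := lt_trans zero_lt_one ht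
  have hb : b = a * t := by rw [htdef]; field_simp [ha.ne']
  set τ := (1 - e) / (1 + e) with hτdef
  have hτ0 : 0 ≤ τ := div_nonneg (by linarith) (by linarith)
  set C := t ^ τ with hCdef
  have hC1 : 1 ≤ C := by
    calc (1:ℝ) = t ^ (0:ℝ) := (Real.rpow_zero t).symm
      _ ≤ t ^ τ := Real.rpow_le_rpow_of_exponent_le (le_of_lt ht) hτ0
  have hC0 : 0 < C := lt_of_lt_of_le zero_lt_one hC1
  set U := ∑ i, u i with hUdef
  set V := ∑ i, v i with hVdef
  have hU0 : 0 < U := Finset.sum_pos (fun i _ => hu i) univ_nonempty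
  have hV0 : 0 < V := Finset.sum_pos (fun i _ => hv i) univ_nonempty
  set w : Fin K → ℝ := fun i => u i * V - C * U * v i with hwdef
  -- step 1
  have step1 : ∑ i, r i * w i ≤ ∑ i, (if 0 ≤ w i then b else a) * w i := by
    apply Finset.sum_le_sum
    intro i _
    by_cases hw : 0 ≤ w i
    · rw [if_pos hw]; exact mul_le_mul_of_nonneg_right (hr2 i) hw
    · rw [if_neg hw]
      exact mul_le_mul_of_nonpos_right (hr1 i) (le_of_not_ge hw)
  -- step 2
  have step2 : ∑ i, (if 0 ≤ w i then b else a) * w i ≤ 0 := by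
    set P : Fin K → Prop := fun i => 0 ≤ w i with hPdef
    have hsplit : ∑ i, (if 0 ≤ w i then b else a) * w i =
        b * ∑ i ∈ univ.filter P, w i + a * ∑ i ∈ univ.filter (fun i => ¬ P i), w i := by
      rw [mul_sum, mul_sum, ← Finset.sum_filter_add_sum_filter_not univ P]
      congr 1
      · exact Finset.sum_congr rfl (fun i hi => by
          rw [if_pos ((Finset.mem_filter.mp hi).2)])
      · exact Finset.sum_congr rfl (fun i hi => by
          rw [if_neg ((Finset.mem_filter.mp hi).2)])
    have hwsum : ∀ (s : Finset (Fin K)), ∑ i ∈ s, w i =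
        (∑ i ∈ s, u i) * V - C * U * (∑ i ∈ s, v i) := by
      intro s
      rw [Finset.sum_sub_distrib, ← Finset.sum_mul, ← Finset.mul_sum]
    rw [hsplit, hwsum, hwsum]
    set uS := ∑ i ∈ univ.filter P, u i with huS
    set vS := ∑ i ∈ univ.filter P, v i with hvS
    set uS' := ∑ i ∈ univ.filter (fun i => ¬ P i), u i with huS'
    set vS' := ∑ i ∈ univ.filter (fun i => ¬ P i), v i with hvS'
    have hUsum : uS + uS' = U := by
      rw [huS, huS', hUdef]; exact Finset.sum_filter_add_sum_filter_not _ _ _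
    have hVsum : vS + vS' = V := by
      rw [hvS, hvS', hVdef]; exact Finset.sum_filter_add_sum_filter_not _ _ _
    by_cases hS : (univ.filter P).Nonempty
    · by_cases hS' : (univ.filter (fun i => ¬ P i)).Nonempty
      · -- both nonempty: use lemmaA
        have huS0 : 0 < uS := Finset.sum_pos (fun i _ => hu i) hS
        have hvS0 : 0 < vS := Finset.sum_pos (fun i _ => hv i) hS
        have huS'0 : 0 < uS' := Finset.sum_pos (fun i _ => hu i) hS'
        have hvS'0 : 0 < vS' := Finset.sum_pos (fun i _ => hv i) hS'
        have hcr : e ^ 2 * (uS * vS') ≤ uS' * vS := by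
          rw [huS, hvS', huS', hvS, Finset.sum_mul_sum, Finset.sum_mul_sum, Finset.mul_sum,
            Finset.sum_comm]
          apply Finset.sum_le_sum
          intro l hl
          rw [Finset.mul_sum]
          apply Finset.sum_le_sum
          intro i hi
          exact hcross i l
        have hA := lemmaA huS'0 huS0 hvS'0 hvS0 he0 he1 hcr ht
        have hA' := mul_le_mul_of_nonneg_left hA ha.le
        rw [← hUsum, ← hVsum, hb]
        rw [← hτdef, ← hCdef] at hA'
        nlinarith [hA']
      · -- S' empty
        rw [Finset.not_nonempty_iff_eq_empty] at hS'
        have h1 : uS' = 0 := by rw [huS', hS', Finset.sum_empty]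
        have h2 : vS' = 0 := by rw [hvS', hS', Finset.sum_empty]
        have h3 : uS = U := by rw [← hUsum, h1, add_zero]
        have h4 : vS = V := by rw [← hVsum, h2, add_zero]
        rw [h1, h2, h3, h4]
        have hb0 : 0 < b := lt_trans ha hab
        nlinarith [mul_nonneg (mul_pos hb0 (mul_pos hU0 hV0)).le (sub_nonneg.2 hC1)]
    · -- S empty
      rw [Finset.not_nonempty_iff_eq_empty] at hS
      have h1 : uS = 0 := by rw [huS, hS, Finset.sum_empty]
      have h2 : vS = 0 := by rw [hvS, hS, Finset.sum_empty]
      have h3 : uS' = U := by rw [← hUsum, h1, zero_add]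
      have h4 : vS' = V := by rw [← hVsum, h2, zero_add]
      rw [h1, h2, h3, h4]
      nlinarith [mul_nonneg (mul_pos ha (mul_pos hU0 hV0)).le (sub_nonneg.2 hC1)]
  have hfinal : ∑ i, r i * w i = (∑ i, u i * r i) * V - C * U * (∑ i, v i * r i) := by
    calc ∑ i, r i * w i = ∑ i, ((u i * r i) * V - C * U * (v i * r i)) :=
          Finset.sum_congr rfl (fun i _ => by simp only [hwdef]; ring)
      _ = (∑ i, u i * r i) * V - C * U * (∑ i, v i * r i) := by
          rw [Finset.sum_sub_distrib, ← Finset.sum_mul, ← Finset.mul_sum]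
  have := le_trans step1 step2
  rw [hfinal] at this
  linarith

lemma vecMul_apply {K : ℕ} (M : Matrix (Fin K) (Fin K) ℝ) (z : Fin K → ℝ) (j : Fin K) :
    Matrix.vecMul z M j = ∑ i, z i * M i j := rfl

lemma vecMul_pos {K : ℕ} [Nonempty (Fin K)] {M : Matrix (Fin K) (Fin K) ℝ}
    (hM : ∀ i j, 0 < M i j) {z : Fin K → ℝ} (hz : ∀ i, 0 < z i) (j : Fin K) :
    0 < Matrix.vecMul z M j := by
  rw [vecMul_apply]
  exact Finset.sum_pos (fun i _ => mul_pos (hz i) (hM i j)) univ_nonempty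

lemma crossaux {K : ℕ} {M : Matrix (Fin K) (Fin K) ℝ} {e : ℝ} {y : Fin K → ℝ}
    (hy : ∀ i, 0 < y i)
    (hcrossM : ∀ i j l k, e ^ 2 * (M l j * M i k) ≤ M i j * M l k)
    (i l j k : Fin K) :
    e ^ 2 * ((y l * M l j) * (y i * M i k)) ≤ (y i * M i j) * (y l * M l k) := by
  nlinarith [mul_le_mul_of_nonneg_left (hcrossM i j l k) (mul_pos (hy i) (hy l)).le]

lemma upper {K : ℕ} [Nonempty (Fin K)] {M : Matrix (Fin K) (Fin K) ℝ} (hM : ∀ i j, 0 < M i j)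
    {e : ℝ} (he0 : 0 ≤ e) (he1 : e ≤ 1)
    (hcrossM : ∀ i j l k, e ^ 2 * (M l j * M i k) ≤ M i j * M l k)
    {x y : Fin K → ℝ} (hx : ∀ i, 0 < x i) (hy : ∀ i, 0 < y i)
    (hd : 0 < hilbertDist x y) :
    hilbertDist (Matrix.vecMul x M) (Matrix.vecMul y M) ≤
      (1 - e) / (1 + e) * hilbertDist x y := by
  have hfpos : ∀ i, 0 < x i / y i := fun i => div_pos (hx i) (hy i)
  set a := ⨅ i, x i / y i with hadef
  set b := ⨆ i, x i / y i with hbdef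
  have ha : 0 < a := inf_pos hfpos
  have hb : 0 < b := sup_pos hfpos
  have hdxy : hilbertDist x y = Real.log (b / a) := rfl
  have hba : 1 < b / a := by
    by_contra h
    push_neg at h
    have : Real.log (b / a) ≤ 0 := Real.log_nonpos (by positivity) h
    rw [hdxy] at hd; linarith
  have hab : a < b := (one_lt_div ha).mp hba
  set τ := (1 - e) / (1 + e) with hτdef
  set val : Fin K → ℝ := fun j => Matrix.vecMul x M j / Matrix.vecMul y M j with hvaldef
  have hvalpos : ∀ j, 0 < val j :=
    fun j => div_pos (vecMul_pos hM hx j) (vecMul_pos hM hy j)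
  obtain ⟨j0, hj0⟩ := exists_eq_ciSup val
  obtain ⟨k0, hk0⟩ := exists_eq_ciInf val
  -- apply core
  have hcore := core (u := fun i => y i * M i j0) (v := fun i => y i * M i k0)
    (r := fun i => x i / y i) (a := a) (b := b) (e := e)
    (fun i => mul_pos (hy i) (hM i j0)) (fun i => mul_pos (hy i) (hM i k0)) ha hab he0 he1
    (fun i l => crossaux hy hcrossM i l j0 k0)
    (fun i => le_of_eq_of_le hadef (inf_le' (fun i => x i / y i) i))
    (fun i => (le_sup' (fun i => x i / y i) i).trans_eq hbdef.symm)
  have hsum : ∀ j, ∑ i, (y i * M i j) * (x i / y i) = Matrix.vecMul x M j := by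
    intro j
    rw [vecMul_apply]
    refine Finset.sum_congr rfl (fun i _ => ?_)
    have hne : y i ≠ 0 := (hy i).ne'
    field_simp
  have hsum3 : ∀ j, ∑ i, (y i * M i j) = Matrix.vecMul y M j := fun j => rfl
  rw [hsum, hsum, hsum3, hsum3] at hcore
  -- hcore : XMj0 * YMk0 ≤ (b/a)^τ * (YMj0 * XMk0)
  have hLHS : val j0 / val k0 = (Matrix.vecMul x M j0 * Matrix.vecMul y M k0) /
      (Matrix.vecMul y M j0 * Matrix.vecMul x M k0) := by
    have e1 : Matrix.vecMul y M j0 ≠ 0 := (vecMul_pos hM hy j0).ne'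
    have e2 : Matrix.vecMul x M k0 ≠ 0 := (vecMul_pos hM hx k0).ne'
    have e3 : Matrix.vecMul y M k0 ≠ 0 := (vecMul_pos hM hy k0).ne'
    simp only [hvaldef]
    field_simp
    try ring
  have hratio : val j0 / val k0 ≤ (b / a) ^ τ := by
    rw [hLHS, div_le_iff₀ (mul_pos (vecMul_pos hM hy j0) (vecMul_pos hM hx k0))]
    nlinarith [hcore]
  have hfin : hilbertDist (Matrix.vecMul x M) (Matrix.vecMul y M) =
      Real.log (val j0 / val k0) := by
    rw [show hilbertDist (Matrix.vecMul x M) (Matrix.vecMul y M) =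
      Real.log ((⨆ j, val j) / (⨅ j, val j)) from rfl, hj0, hk0]
  rw [hfin, hdxy]
  calc Real.log (val j0 / val k0) ≤ Real.log ((b / a) ^ τ) :=
        (Real.log_le_log_iff (div_pos (hvalpos j0) (hvalpos k0))
          (Real.rpow_pos_of_pos (div_pos hb ha) τ)).mpr hratio
    _ = τ * Real.log (b / a) := Real.log_rpow (div_pos hb ha) τ

lemma hilbertDist_nonneg {K : ℕ} [Nonempty (Fin K)] {x y : Fin K → ℝ}
    (hx : ∀ i, 0 < x i) (hy : ∀ i, 0 < y i) : 0 ≤ hilbertDist x y := by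
  have hfpos : ∀ i, 0 < x i / y i := fun i => div_pos (hx i) (hy i)
  have hI : 0 < ⨅ i, x i / y i := inf_pos hfpos
  have hle : (⨅ i, x i / y i) ≤ ⨆ i, x i / y i :=
    le_trans (inf_le' (fun i => x i / y i) (Classical.arbitrary _)) (le_sup' (fun i => x i / y i) (Classical.arbitrary _))
  exact Real.log_nonneg ((one_le_div hI).mpr hle)

lemma vecMul_two {K : ℕ} (M : Matrix (Fin K) (Fin K) ℝ) {p r : Fin K} (hpr : p ≠ r)
    (c dd ε : ℝ) (j : Fin K) :
    Matrix.vecMul (fun i => if i = p then c else if i = r then dd else ε) M j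
      = c * M p j + dd * M r j + ε * ∑ i ∈ (Finset.univ.erase p).erase r, M i j := by
  rw [vecMul_apply]
  set f : Fin K → ℝ := fun i => (if i = p then c else if i = r then dd else ε) * M i j
    with hfdef
  have hrp : r ∈ Finset.univ.erase p :=
    Finset.mem_erase.mpr ⟨Ne.symm hpr, Finset.mem_univ r⟩
  have h1 := Finset.sum_erase_add Finset.univ f (Finset.mem_univ p)
  have h2 := Finset.sum_erase_add (Finset.univ.erase p) f hrp
  have hfp : f p = c * M p j := by simp [hfdef]
  have hfr : f r = dd * M r j := by simp [hfdef, Ne.symm hpr]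
  have hrest : ∑ i ∈ (Finset.univ.erase p).erase r, f i
      = ε * ∑ i ∈ (Finset.univ.erase p).erase r, M i j := by
    rw [Finset.mul_sum]
    refine Finset.sum_congr rfl (fun i hi => ?_)
    have hir : i ≠ r := (Finset.mem_erase.mp hi).1
    have hip : i ≠ p := (Finset.mem_erase.mp (Finset.mem_erase.mp hi).2).1
    simp [hfdef, hip, hir]
  rw [hfp] at h1
  rw [hfr, hrest] at h2
  linarith

lemma hilbertDist_two {K : ℕ} [Nonempty (Fin K)] {p r : Fin K} (hpr : p ≠ r)
    {c dd ε t : ℝ} (hc : 0 < c) (hd : 0 < dd) (hε : 0 < ε) (ht : 1 < t) :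
    hilbertDist (fun i => if i = p then c else if i = r then t * dd else ε)
      (fun i => if i = p then c else if i = r then dd else ε) = Real.log t := by
  set x : Fin K → ℝ := fun i => if i = p then c else if i = r then t * dd else ε with hx
  set y : Fin K → ℝ := fun i => if i = p then c else if i = r then dd else ε with hy
  have hf : ∀ i, x i / y i = if i = r then t else 1 := by
    intro i
    by_cases hip : i = p
    · subst hip
      simp only [hx, hy, if_pos rfl, if_neg hpr]
      exact div_self hc.ne'
    · by_cases hir : i = r
      · subst hir
        simp only [hx, hy, if_neg hip, if_pos rfl, ↓reduceIte]
        field_simp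
      · simp only [hx, hy, if_neg hip, if_neg hir]
        exact div_self hε.ne'
  have hsup : (⨆ i, x i / y i) = t := by
    apply le_antisymm
    · apply ciSup_le
      intro i
      rw [hf i]
      split
      · exact le_refl t
      · exact le_of_lt ht
    · have : x r / y r = t := by rw [hf r, if_pos rfl]
      rw [← this]
      exact le_sup' (fun i => x i / y i) r
  have hinf : (⨅ i, x i / y i) = 1 := by
    apply le_antisymm
    · have : x p / y p = 1 := by rw [hf p, if_neg hpr]
      rw [← this]
      exact inf_le' (fun i => x i / y i) p
    · apply le_ciInf
      intro i
      rw [hf i]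
      split
      · exact le_of_lt ht
      · exact le_refl 1
  rw [show hilbertDist x y = Real.log ((⨆ i, x i / y i) / (⨅ i, x i / y i)) from rfl,
    hsup, hinf, div_one]

end BirkhoffAux

/-- Birkhoff's formula: for an entrywise positive matrix `M`,
`τ(M) = (1 − √φ(M)) / (1 + √φ(M))`, where
`φ(M) = min_{p,q,r,s} (M_{pq} M_{rs}) / (M_{rq} M_{ps})`. -/
theorem birkhoff_formula
    {K : ℕ} (hK : 0 < K)
    (M : Matrix (Fin K) (Fin K) ℝ) (hM_pos : ∀ i j, 0 < M i j) :
    birkhoff M =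
      (1 - Real.sqrt (⨅ t : Fin K × Fin K × Fin K × Fin K,
          M t.1 t.2.1 * M t.2.2.1 t.2.2.2 / (M t.2.2.1 t.2.1 * M t.1 t.2.2.2))) /
        (1 + Real.sqrt (⨅ t : Fin K × Fin K × Fin K × Fin K,
          M t.1 t.2.1 * M t.2.2.1 t.2.2.2 / (M t.2.2.1 t.2.1 * M t.1 t.2.2.2))) := by
  classical
  haveI : Nonempty (Fin K) := Fin.pos_iff_nonempty.mp hK
  set g : Fin K × Fin K × Fin K × Fin K → ℝ :=
    fun t => M t.1 t.2.1 * M t.2.2.1 t.2.2.2 / (M t.2.2.1 t.2.1 * M t.1 t.2.2.2) with hgdef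
  have hgpos : ∀ tu, 0 < g tu := fun tu =>
    div_pos (mul_pos (hM_pos _ _) (hM_pos _ _)) (mul_pos (hM_pos _ _) (hM_pos _ _))
  obtain ⟨t0, ht0⟩ := Finite.exists_min g
  have hΦeq : (⨅ t, g t) = g t0 :=
    le_antisymm (ciInf_le (Set.Finite.bddBelow (Set.finite_range g)) t0) (le_ciInf ht0)
  set Φ : ℝ := ⨅ t, g t with hΦdef
  have hΦpos : 0 < Φ := by rw [hΦeq]; exact hgpos t0
  have hΦ1 : Φ ≤ 1 := by
    obtain ⟨i⟩ := (inferInstance : Nonempty (Fin K))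
    have h : Φ ≤ g (i, i, i, i) := ciInf_le (Set.Finite.bddBelow (Set.finite_range g)) _
    have hgi : g (i, i, i, i) = 1 := by
      show M i i * M i i / (M i i * M i i) = 1
      exact div_self (mul_pos (hM_pos i i) (hM_pos i i)).ne'
    rw [hgi] at h
    exact h
  set e := Real.sqrt Φ with hedef
  have he2 : e ^ 2 = Φ := Real.sq_sqrt hΦpos.le
  have he0 : 0 ≤ e := Real.sqrt_nonneg Φ
  have he0' : 0 < e := Real.sqrt_pos.mpr hΦpos
  have he1 : e ≤ 1 := by rw [hedef, ← Real.sqrt_one]; exact Real.sqrt_le_sqrt hΦ1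
  have h1e : (0:ℝ) < 1 + e := by linarith
  have hcrossM : ∀ i j l k, e ^ 2 * (M l j * M i k) ≤ M i j * M l k := by
    intro i j l k
    have h : Φ ≤ g (i, j, l, k) := ciInf_le (Set.Finite.bddBelow (Set.finite_range g)) _
    have hpos : 0 < M l j * M i k := mul_pos (hM_pos _ _) (hM_pos _ _)
    rw [he2]
    calc Φ * (M l j * M i k) ≤ g (i, j, l, k) * (M l j * M i k) :=
          mul_le_mul_of_nonneg_right h hpos.le
      _ = M i j * M l k := by
          show M i j * M l k / (M l j * M i k) * (M l j * M i k) = M i j * M l k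
          exact div_mul_cancel₀ _ hpos.ne'
  set τ := (1 - e) / (1 + e) with hτdef
  set 𝒮 : Set ℝ := {t : ℝ | ∃ x y : Fin K → ℝ, (∀ i, 0 < x i) ∧ (∀ i, 0 < y i) ∧
    0 < hilbertDist x y ∧
    t = hilbertDist (Matrix.vecMul x M) (Matrix.vecMul y M) / hilbertDist x y} with hSdef
  have hub : ∀ z ∈ 𝒮, z ≤ τ := by
    rintro z ⟨x, y, hx, hy, hd, rfl⟩
    rw [div_le_iff₀ hd]
    exact BirkhoffAux.upper hM_pos he0 he1 hcrossM hx hy hd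
  have hbdd : BddAbove 𝒮 := ⟨τ, fun z hz => hub z hz⟩
  have hzero : ∀ z ∈ 𝒮, 0 ≤ z := by
    rintro z ⟨x, y, hx, hy, hd, rfl⟩
    exact div_nonneg (BirkhoffAux.hilbertDist_nonneg
      (fun j => BirkhoffAux.vecMul_pos hM_pos hx j)
      (fun j => BirkhoffAux.vecMul_pos hM_pos hy j)) hd.le
  have hgoal : sSup 𝒮 = τ := by
    rcases lt_or_eq_of_le hΦ1 with hΦlt | hΦone
    · -- Φ < 1 : the interesting case
      obtain ⟨p, q, r, s⟩ := t0
      have hΦg : Φ = M p q * M r s / (M r q * M p s) := hΦeq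
      have hpr : p ≠ r := by
        rintro rfl
        rw [show M p q * M p s / (M p q * M p s) = 1 from div_self (mul_pos (hM_pos p q) (hM_pos p s)).ne'] at hΦg
        rw [hΦg] at hΦlt
        exact lt_irrefl 1 hΦlt
      have hden : (0:ℝ) < M r q * M p s := mul_pos (hM_pos r q) (hM_pos p s)
      have hrel : M p q * M r s = e ^ 2 * (M r q * M p s) := by
        rw [he2]
        rw [eq_div_iff hden.ne'] at hΦg
        linarith
      have hcc : 0 < M r s := hM_pos r s
      have hdd : 0 < M p s * e := mul_pos (hM_pos p s) he0'
      set E : Fin K → ℝ := fun j => ∑ i ∈ (Finset.univ.erase p).erase r, M i j with hEdef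
      have hE0 : ∀ j, 0 ≤ E j := fun j => Finset.sum_nonneg (fun i _ => (hM_pos i j).le)
      -- membership of the test elements
      have hmem : ∀ ε : ℝ, 0 < ε → ∀ u : ℝ, 1 < u →
          hilbertDist
              (Matrix.vecMul
                (fun i => if i = p then M r s else if i = r then u * (M p s * e) else ε) M)
              (Matrix.vecMul
                (fun i => if i = p then M r s else if i = r then M p s * e else ε) M) /
            Real.log u ∈ 𝒮 := by
        intro ε hε u hu
        have hxpos : ∀ i,
            0 < (fun i => if i = p then M r s else if i = r then u * (M p s * e) else ε) i := by
          intro i; dsimp only; split_ifs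
          · exact hcc
          · exact mul_pos (lt_trans one_pos hu) hdd
          · exact hε
        have hypos : ∀ i,
            0 < (fun i => if i = p then M r s else if i = r then M p s * e else ε) i := by
          intro i; dsimp only; split_ifs
          · exact hcc
          · exact hdd
          · exact hε
        have hdxy := BirkhoffAux.hilbertDist_two (K := K) hpr hcc hdd hε hu
        rw [hSdef]
        exact ⟨_, _, hxpos, hypos, by rw [hdxy]; exact Real.log_pos hu, by rw [hdxy]⟩
      -- the ε-indexed lower bounds
      set L : ℝ → ℝ := fun ε =>
        (M r s * M p q + M p s * e * M r q + ε * E q)⁻¹ * (M p s * e * M r q) -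
        (M r s * M p s + M p s * e * M r s + ε * E s)⁻¹ * (M p s * e * M r s) with hLdef
      have hstep : ∀ ε : ℝ, 0 < ε → L ε ≤ sSup 𝒮 := by
        intro ε hε
        set Nq : ℝ → ℝ := fun u => M r s * M p q + u * (M p s * e * M r q) + ε * E q with hNqdef
        set Ns : ℝ → ℝ := fun u => M r s * M p s + u * (M p s * e * M r s) + ε * E s with hNsdef
        have hNqpos : ∀ u : ℝ, 0 < u → 0 < Nq u := by
          intro u hu
          have h1 : 0 < M r s * M p q := mul_pos hcc (hM_pos p q)
          have h2 : 0 < u * (M p s * e * M r q) := mul_pos hu (mul_pos hdd (hM_pos r q))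
          have h3 : 0 ≤ ε * E q := mul_nonneg hε.le (hE0 q)
          simp only [hNqdef]; linarith
        have hNspos : ∀ u : ℝ, 0 < u → 0 < Ns u := by
          intro u hu
          have h1 : 0 < M r s * M p s := mul_pos hcc (hM_pos p s)
          have h2 : 0 < u * (M p s * e * M r s) := mul_pos hu (mul_pos hdd (hM_pos r s))
          have h3 : 0 ≤ ε * E s := mul_nonneg hε.le (hE0 s)
          simp only [hNsdef]; linarith
        set F : ℝ → ℝ := fun u => Real.log (Nq u) - Real.log (Ns u) with hFdef
        have hDq : HasDerivAt Nq (M p s * e * M r q) 1 := by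
          simp only [hNqdef]
          exact ((hasDerivAt_mul_const (M p s * e * M r q)).const_add
            (M r s * M p q)).add_const (ε * E q)
        have hDs : HasDerivAt Ns (M p s * e * M r s) 1 := by
          simp only [hNsdef]
          exact ((hasDerivAt_mul_const (M p s * e * M r s)).const_add
            (M r s * M p s)).add_const (ε * E s)
        have hDF : HasDerivAt F
            ((Nq 1)⁻¹ * (M p s * e * M r q) - (Ns 1)⁻¹ * (M p s * e * M r s)) 1 :=
          ((Real.hasDerivAt_log (hNqpos 1 one_pos).ne').comp 1 hDq).sub
            ((Real.hasDerivAt_log (hNspos 1 one_pos).ne').comp 1 hDs)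
        have hLe : L ε = (Nq 1)⁻¹ * (M p s * e * M r q) - (Ns 1)⁻¹ * (M p s * e * M r s) := by
          simp only [hLdef, hNqdef, hNsdef, one_mul]
        have hsub : Set.Ioi (1:ℝ) ⊆ {(1:ℝ)}ᶜ :=
          fun u hu => Set.mem_compl_singleton_iff.mpr (LT.lt.ne' hu)
        have T1 : Tendsto (slope F 1) (nhdsWithin 1 (Set.Ioi 1))
            (nhds ((Nq 1)⁻¹ * (M p s * e * M r q) - (Ns 1)⁻¹ * (M p s * e * M r s))) :=
          (hasDerivAt_iff_tendsto_slope.mp hDF).mono_left (nhdsWithin_mono 1 hsub)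
        have T2 : Tendsto (slope Real.log 1) (nhdsWithin 1 (Set.Ioi 1)) (nhds 1) := by
          have h := hasDerivAt_iff_tendsto_slope.mp (Real.hasDerivAt_log one_ne_zero)
          rw [inv_one] at h
          exact h.mono_left (nhdsWithin_mono 1 hsub)
        have T3 : Tendsto (fun u => (F u - F 1) / Real.log u) (nhdsWithin 1 (Set.Ioi 1))
            (nhds (L ε)) := by
          have h := T1.div T2 one_ne_zero
          rw [div_one] at h
          have heq : ∀ u ∈ Set.Ioi (1:ℝ),
              slope F 1 u / slope Real.log 1 u = (F u - F 1) / Real.log u := by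
            intro u hu
            have h1 : u - 1 ≠ 0 := sub_ne_zero.mpr (LT.lt.ne' hu)
            have h2 : Real.log u ≠ 0 := (Real.log_pos hu).ne'
            rw [slope_def_field, slope_def_field, Real.log_one, sub_zero]
            field_simp
          rw [hLe]
          exact Tendsto.congr' (eventually_nhdsWithin_of_forall heq) h
        have hev : ∀ᶠ u in nhdsWithin 1 (Set.Ioi 1),
            (F u - F 1) / Real.log u ≤ sSup 𝒮 := by
          apply eventually_nhdsWithin_of_forall
          intro u hu
          have hu1 : (1:ℝ) < u := hu
          have hu0 : (0:ℝ) < u := lt_trans one_pos hu1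
          have hlogu : 0 < Real.log u := Real.log_pos hu1
          have hxpos : ∀ i,
              0 < (fun i => if i = p then M r s else if i = r then u * (M p s * e) else ε) i := by
            intro i; dsimp only; split_ifs
            · exact hcc
            · exact mul_pos hu0 hdd
            · exact hε
          have hypos : ∀ i,
              0 < (fun i => if i = p then M r s else if i = r then M p s * e else ε) i := by
            intro i; dsimp only; split_ifs
            · exact hcc
            · exact hdd
            · exact hε
          have hXq : ∀ j, Matrix.vecMul
              (fun i => if i = p then M r s else if i = r then u * (M p s * e) else ε) M j
              = M r s * M p j + u * (M p s * e * M r j) + ε * E j := by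
            intro j
            rw [BirkhoffAux.vecMul_two M hpr]
            simp only [hEdef]
            ring
          have hYq : ∀ j, Matrix.vecMul
              (fun i => if i = p then M r s else if i = r then M p s * e else ε) M j
              = M r s * M p j + 1 * (M p s * e * M r j) + ε * E j := by
            intro j
            rw [BirkhoffAux.vecMul_two M hpr]
            simp only [hEdef]
            ring
          have hXqq : Matrix.vecMul
              (fun i => if i = p then M r s else if i = r then u * (M p s * e) else ε) M q
              = Nq u := by rw [hXq q]
          have hXss : Matrix.vecMul
              (fun i => if i = p then M r s else if i = r then u * (M p s * e) else ε) M s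
              = Ns u := by rw [hXq s]
          have hYqq : Matrix.vecMul
              (fun i => if i = p then M r s else if i = r then M p s * e else ε) M q
              = Nq 1 := by rw [hYq q]
          have hYss : Matrix.vecMul
              (fun i => if i = p then M r s else if i = r then M p s * e else ε) M s
              = Ns 1 := by rw [hYq s]
          set X : Fin K → ℝ := Matrix.vecMul
            (fun i => if i = p then M r s else if i = r then u * (M p s * e) else ε) M with hXdef
          set Y : Fin K → ℝ := Matrix.vecMul
            (fun i => if i = p then M r s else if i = r then M p s * e else ε) M with hYdef
          have hvalpos : ∀ j, 0 < X j / Y j := fun j =>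
            div_pos (BirkhoffAux.vecMul_pos hM_pos hxpos j)
              (BirkhoffAux.vecMul_pos hM_pos hypos j)
          have hDge : F u - F 1 ≤ hilbertDist X Y := by
            have hrwd : hilbertDist X Y =
                Real.log (⨆ j, X j / Y j) - Real.log (⨅ j, X j / Y j) := by
              rw [show hilbertDist X Y =
                Real.log ((⨆ j, X j / Y j) / (⨅ j, X j / Y j)) from rfl,
                Real.log_div (BirkhoffAux.sup_pos hvalpos).ne'
                  (BirkhoffAux.inf_pos hvalpos).ne']
            have h1 : Real.log (X q / Y q) ≤ Real.log (⨆ j, X j / Y j) :=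
              (Real.log_le_log_iff (hvalpos q) (BirkhoffAux.sup_pos hvalpos)).mpr
                (BirkhoffAux.le_sup' (fun j => X j / Y j) q)
            have h2 : Real.log (⨅ j, X j / Y j) ≤ Real.log (X s / Y s) :=
              (Real.log_le_log_iff (BirkhoffAux.inf_pos hvalpos) (hvalpos s)).mpr
                (BirkhoffAux.inf_le' (fun j => X j / Y j) s)
            have h3 : Real.log (X q / Y q) = Real.log (Nq u) - Real.log (Nq 1) := by
              rw [hXqq, hYqq, Real.log_div (hNqpos u hu0).ne' (hNqpos 1 one_pos).ne']
            have h4 : Real.log (X s / Y s) = Real.log (Ns u) - Real.log (Ns 1) := by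
              rw [hXss, hYss, Real.log_div (hNspos u hu0).ne' (hNspos 1 one_pos).ne']
            have h5 : F u - F 1 =
                (Real.log (Nq u) - Real.log (Nq 1)) - (Real.log (Ns u) - Real.log (Ns 1)) := by
              simp only [hFdef]; ring
            rw [hrwd, h5]
            rw [h3] at h1
            rw [h4] at h2
            linarith
          calc (F u - F 1) / Real.log u ≤ hilbertDist X Y / Real.log u :=
                (div_le_div_iff_of_pos_right hlogu).mpr hDge
            _ ≤ sSup 𝒮 := le_csSup hbdd (hmem ε hε u hu1)
        exact le_of_tendsto T3 hev
      -- let ε → 0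
      have hcont : Tendsto L (nhdsWithin 0 (Set.Ioi 0)) (nhds (L 0)) := by
        have hne1 : M r s * M p q + M p s * e * M r q + (0:ℝ) * E q ≠ 0 := by
          have h0 : (0:ℝ) * E q = 0 := zero_mul _
          rw [h0, add_zero]
          exact (add_pos (mul_pos hcc (hM_pos p q)) (mul_pos hdd (hM_pos r q))).ne'
        have hne2 : M r s * M p s + M p s * e * M r s + (0:ℝ) * E s ≠ 0 := by
          have h0 : (0:ℝ) * E s = 0 := zero_mul _
          rw [h0, add_zero]
          exact (add_pos (mul_pos hcc (hM_pos p s)) (mul_pos hdd (hM_pos r s))).ne'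
        have hc : ContinuousAt L 0 := by
          simp only [hLdef]
          have c1 : ContinuousAt (fun x : ℝ => M r s * M p q + M p s * e * M r q + x * E q) 0 :=
            by fun_prop
          have c2 : ContinuousAt (fun x : ℝ => M r s * M p s + M p s * e * M r s + x * E s) 0 :=
            by fun_prop
          exact ((c1.inv₀ hne1).mul continuousAt_const).sub
            ((c2.inv₀ hne2).mul continuousAt_const)
        exact hc.tendsto.mono_left nhdsWithin_le_nhds
      have hL0 : L 0 = τ := by
        simp only [hLdef, hτdef]
        have hq1 : M r s * M p q + M p s * e * M r q + (0:ℝ) * E q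
            = M r q * M p s * (e * (1 + e)) := by linear_combination hrel
        have hs1 : M r s * M p s + M p s * e * M r s + (0:ℝ) * E s
            = M p s * M r s * (1 + e) := by ring
        rw [hq1, hs1]
        have hMrq : M r q ≠ 0 := (hM_pos r q).ne'
        have hMps : M p s ≠ 0 := (hM_pos p s).ne'
        have hMrs : M r s ≠ 0 := (hM_pos r s).ne'
        field_simp
      have hlow : τ ≤ sSup 𝒮 := by
        rw [← hL0]
        exact le_of_tendsto hcont (eventually_nhdsWithin_of_forall (fun ε hε => hstep ε hε))
      have hne : 𝒮.Nonempty := ⟨_, hmem 1 one_pos 2 one_lt_two⟩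
      exact le_antisymm (csSup_le hne hub) hlow
    · -- Φ = 1
      have he1' : e = 1 := by rw [hedef, hΦone, Real.sqrt_one]
      have hτ0 : τ = 0 := by rw [hτdef, he1']; norm_num
      rcases Set.eq_empty_or_nonempty 𝒮 with hemp | hne
      · rw [hτ0, hemp, Real.sSup_empty]
      · have hz00 : ∀ z ∈ 𝒮, z = 0 := fun z hz =>
          le_antisymm (hτ0 ▸ hub z hz) (hzero z hz)
        obtain ⟨z, hz⟩ := hne
        rw [hτ0]
        exact le_antisymm (csSup_le ⟨z, hz⟩ (fun w hw => (hz00 w hw).le))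
          (le_csSup hbdd ((hz00 z hz) ▸ hz))
  calc birkhoff M = sSup 𝒮 := rfl
    _ = τ := hgoal
end

section
/- For every entrywise positive K×K real matrix M, the Birkhoff contraction coefficient of its transpose equals that of M: τ(Mᵀ) = τ(M). -/
namespace BirkhoffTransposeAux

open Real Finset Filter Topology

set_option maxHeartbeats 1000000 in


lemma mad_core {K : ℕ} (hK : 0 < K) (u ρ L : Fin K → ℝ) (hu : ∀ i, 0 < u i)
    {lam Lam : ℝ} (hlam : 0 < lam) (hρ1 : ∀ i, lam ≤ ρ i) (hρ2 : ∀ i, ρ i ≤ Lam)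
    {l0 l1 : ℝ} (hL1 : ∀ i, l0 ≤ L i) (hL2 : ∀ i, L i ≤ l1) :
    |(∑ i, u i * L i) / (∑ i, u i) - (∑ i, u i * ρ i * L i) / (∑ i, u i * ρ i)|
      ≤ (Real.sqrt Lam - Real.sqrt lam) / (Real.sqrt Lam + Real.sqrt lam) * (l1 - l0) := by
  haveI hne : Nonempty (Fin K) := ⟨⟨0, hK⟩⟩
  have i0 : Fin K := ⟨0, hK⟩
  have hosc : l0 ≤ l1 := le_trans (hL1 i0) (hL2 i0)
  have hlamLam : lam ≤ Lam := le_trans (hρ1 i0) (hρ2 i0)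
  have hU : 0 < ∑ i, u i := Finset.sum_pos (fun i _ => hu i) Finset.univ_nonempty
  have hV : 0 < ∑ i, u i * ρ i :=
    Finset.sum_pos (fun i _ => mul_pos (hu i) (lt_of_lt_of_le hlam (hρ1 i))) Finset.univ_nonempty
  set U := ∑ i, u i with hUdef
  set V := ∑ i, u i * ρ i with hVdef
  have hUV : U * V ≠ 0 := (mul_pos hU hV).ne'
  have hsl : 0 < Real.sqrt lam := Real.sqrt_pos.mpr hlam
  have hsL : 0 < Real.sqrt Lam := Real.sqrt_pos.mpr (lt_of_lt_of_le hlam hlamLam)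
  have hsle : Real.sqrt lam ≤ Real.sqrt Lam := Real.sqrt_le_sqrt hlamLam
  set t := (Real.sqrt Lam - Real.sqrt lam) / (Real.sqrt Lam + Real.sqrt lam) with htdef
  have ht0 : 0 ≤ t := div_nonneg (by linarith) (by linarith)
  set c0 := (l0 + l1) / 2 with hc0def
  have key : (∑ i, u i * L i) / U - (∑ i, u i * ρ i * L i) / V
      = ∑ i, (u i / U - u i * ρ i / V) * (L i - c0) := by
    have expand : ∀ i ∈ Finset.univ, (u i / U - u i * ρ i / V) * (L i - c0)
        = (u i * L i) / U - (u i * ρ i * L i) / V - c0 * (u i / U) + c0 * (u i * ρ i / V) := by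
      intro i _; ring
    rw [Finset.sum_congr rfl expand]
    rw [Finset.sum_add_distrib, Finset.sum_sub_distrib, Finset.sum_sub_distrib,
      ← Finset.mul_sum, ← Finset.mul_sum, ← Finset.sum_div, ← Finset.sum_div,
      ← Finset.sum_div, ← Finset.sum_div, ← hUdef, ← hVdef,
      div_self (ne_of_gt hU), div_self (ne_of_gt hV)]
    ring
  rw [key]
  have habs : |∑ i, (u i / U - u i * ρ i / V) * (L i - c0)|
      ≤ ∑ i, u i * |V - ρ i * U| / (U * V) * ((l1 - l0) / 2) := by
    refine le_trans (Finset.abs_sum_le_sum_abs _ _) (Finset.sum_le_sum fun i _ => ?_)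
    rw [abs_mul]
    have h0 : u i / U - u i * ρ i / V = u i * (V - ρ i * U) / (U * V) := by
      field_simp
    have h1 : |u i / U - u i * ρ i / V| = u i * |V - ρ i * U| / (U * V) := by
      rw [h0, abs_div, abs_mul, abs_of_pos (hu i), abs_of_pos (mul_pos hU hV)]
    have h2 : |L i - c0| ≤ (l1 - l0) / 2 := by
      rw [abs_le]
      have h3 := hL1 i; have h4 := hL2 i
      constructor <;> simp only [hc0def] <;> linarith
    rw [h1]
    refine mul_le_mul_of_nonneg_left h2 ?_
    exact div_nonneg (mul_nonneg (hu i).le (abs_nonneg _)) (mul_pos hU hV).le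
  have hSbound : ∑ i, u i * |V - ρ i * U| ≤ 2 * t * (U * V) := by
    by_cases hll : Lam = lam
    · have hre : ∀ i, ρ i = lam := fun i => le_antisymm (hll ▸ hρ2 i) (hρ1 i)
      have hVe : V = lam * U := by
        rw [hVdef, hUdef, Finset.mul_sum]
        exact Finset.sum_congr rfl fun i _ => by rw [hre i]; ring
      have hz : ∀ i ∈ Finset.univ, u i * |V - ρ i * U| = 0 := by
        intro i _; rw [hre i, hVe]; simp [mul_comm]
      rw [Finset.sum_congr rfl hz, Finset.sum_const_zero]
      positivity
    have hlt : lam < Lam := lt_of_le_of_ne hlamLam (Ne.symm hll)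
    have hpos : 0 < Lam - lam := by linarith
    have hVl : lam * U ≤ V := by
      rw [hVdef, hUdef, Finset.mul_sum]
      exact Finset.sum_le_sum fun i _ => by nlinarith [hρ1 i, hu i]
    have hVL : V ≤ Lam * U := by
      rw [hVdef, hUdef, Finset.mul_sum]
      exact Finset.sum_le_sum fun i _ => by nlinarith [hρ2 i, hu i]
    have chord : ∀ i, (Lam - lam) * (u i * |V - ρ i * U|)
        ≤ u i * ((V - lam * U) * (Lam - ρ i) + (Lam * U - V) * (ρ i - lam)) := by
      intro i
      have hh1 : 0 ≤ u i * ((Lam * U - V) * (ρ i - lam)) :=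
        mul_nonneg (hu i).le (mul_nonneg (by linarith) (by linarith [hρ1 i]))
      have hh2 : 0 ≤ u i * ((V - lam * U) * (Lam - ρ i)) :=
        mul_nonneg (hu i).le (mul_nonneg (by linarith) (by linarith [hρ2 i]))
      rcases abs_cases (V - ρ i * U) with ⟨h1, _⟩ | ⟨h1, _⟩ <;> rw [h1] <;> nlinarith [hρ1 i, hρ2 i]
    have hsum : ∑ i, u i * ((V - lam * U) * (Lam - ρ i) + (Lam * U - V) * (ρ i - lam))
        = 2 * (V - lam * U) * (Lam * U - V) := by
      have e : ∀ i ∈ Finset.univ, u i * ((V - lam * U) * (Lam - ρ i) + (Lam * U - V) * (ρ i - lam))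
          = ((V - lam * U) * Lam - (Lam * U - V) * lam) * u i
            + ((Lam * U - V) - (V - lam * U)) * (u i * ρ i) := by
        intro i _; ring
      rw [Finset.sum_congr rfl e, Finset.sum_add_distrib, ← Finset.mul_sum, ← Finset.mul_sum,
        ← hUdef, ← hVdef]
      ring
    have step1 : (Lam - lam) * ∑ i, u i * |V - ρ i * U| ≤ 2 * (V - lam * U) * (Lam * U - V) := by
      rw [Finset.mul_sum]
      exact le_of_le_of_eq (Finset.sum_le_sum fun i _ => chord i) hsum
    have e1 : Real.sqrt lam * Real.sqrt lam = lam := Real.mul_self_sqrt hlam.le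
    have e2 : Real.sqrt Lam * Real.sqrt Lam = Lam := Real.mul_self_sqrt (by linarith)
    set s := Real.sqrt lam * Real.sqrt Lam with hsdef
    have hs2 : s * s = lam * Lam := by
      rw [hsdef]
      linear_combination (Real.sqrt Lam * Real.sqrt Lam) * e1 + lam * e2
    have hexp : (Real.sqrt Lam - Real.sqrt lam) ^ 2 = Lam + lam - 2 * s := by
      rw [hsdef]; linear_combination e2 + e1
    have ht : t * (Lam - lam) = (Real.sqrt Lam - Real.sqrt lam) ^ 2 := by
      rw [htdef, div_mul_eq_mul_div, div_eq_iff (by positivity)]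
      linear_combination (Real.sqrt lam - Real.sqrt Lam) * e2 + (Real.sqrt Lam - Real.sqrt lam) * e1
    have key2 : (V - lam * U) * (Lam * U - V) ≤ (Real.sqrt Lam - Real.sqrt lam) ^ 2 * (U * V) := by
      rw [hexp]
      nlinarith [sq_nonneg (V - s * U), hs2, sq_nonneg U]
    have step2 : 2 * (V - lam * U) * (Lam * U - V) ≤ (Lam - lam) * (2 * t * (U * V)) := by
      have : (Lam - lam) * (2 * t * (U * V)) = 2 * ((Real.sqrt Lam - Real.sqrt lam) ^ 2 * (U * V)) := by
        rw [← ht]; ring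
      rw [this]; linarith [key2]
    have step3 : (Lam - lam) * (∑ i, u i * |V - ρ i * U|) ≤ (Lam - lam) * (2 * t * (U * V)) :=
      le_trans step1 step2
    exact le_of_mul_le_mul_left step3 hpos
  calc |∑ i, (u i / U - u i * ρ i / V) * (L i - c0)|
      ≤ ∑ i, u i * |V - ρ i * U| / (U * V) * ((l1 - l0) / 2) := habs
    _ = (∑ i, u i * |V - ρ i * U|) * ((l1 - l0) / 2) / (U * V) := by
        simp only [div_mul_eq_mul_div, ← Finset.sum_div, ← Finset.sum_mul]
    _ ≤ (2 * t * (U * V)) * ((l1 - l0) / 2) / (U * V) := by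
        exact (div_le_div_iff_of_pos_right (mul_pos hU hV)).mpr
          (mul_le_mul_of_nonneg_right hSbound (by linarith))
    _ = t * (l1 - l0) := by field_simp


variable {K : ℕ}

lemma iInf_ratio_pos (hK : 0 < K) {x y : Fin K → ℝ} (hx : ∀ i, 0 < x i) (hy : ∀ i, 0 < y i) :
    0 < ⨅ i, x i / y i := by
  haveI : Nonempty (Fin K) := ⟨⟨0, hK⟩⟩
  obtain ⟨i0, hi0⟩ := Finite.exists_min (fun i => x i / y i)
  have : ⨅ i, x i / y i = x i0 / y i0 :=
    le_antisymm (ciInf_le (Finite.bddBelow_range _) i0) (le_ciInf hi0)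
  rw [this]; exact div_pos (hx i0) (hy i0)

lemma iSup_ratio_pos (hK : 0 < K) {x y : Fin K → ℝ} (hx : ∀ i, 0 < x i) (hy : ∀ i, 0 < y i) :
    0 < ⨆ i, x i / y i := by
  haveI : Nonempty (Fin K) := ⟨⟨0, hK⟩⟩
  have h := le_ciSup (Finite.bddAbove_range (fun i => x i / y i)) ⟨0, hK⟩
  exact lt_of_lt_of_le (div_pos (hx _) (hy _)) h

lemma hilbertDist_eq (hK : 0 < K) {x y : Fin K → ℝ} (hx : ∀ i, 0 < x i) (hy : ∀ i, 0 < y i) :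
    hilbertDist x y = Real.log (⨆ i, x i / y i) - Real.log (⨅ i, x i / y i) := by
  rw [hilbertDist, Real.log_div (iSup_ratio_pos hK hx hy).ne' (iInf_ratio_pos hK hx hy).ne']

lemma hilbertDist_nonneg (hK : 0 < K) {x y : Fin K → ℝ} (hx : ∀ i, 0 < x i) (hy : ∀ i, 0 < y i) :
    0 ≤ hilbertDist x y := by
  haveI : Nonempty (Fin K) := ⟨⟨0, hK⟩⟩
  rw [hilbertDist_eq hK hx hy]
  have h1 : ⨅ i, x i / y i ≤ ⨆ i, x i / y i :=
    le_trans (ciInf_le (Finite.bddBelow_range _) ⟨0, hK⟩)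
      (le_ciSup (f := fun k => x k / y k) (Finite.bddAbove_range _) ⟨0, hK⟩)
  have := Real.log_le_log (iInf_ratio_pos hK hx hy) h1
  linarith

/-- probe lower bound -/
lemma probe_le_hilbertDist (hK : 0 < K) {x y : Fin K → ℝ} (hx : ∀ i, 0 < x i)
    (hy : ∀ i, 0 < y i) (i j : Fin K) :
    Real.log ((x i / y i) / (x j / y j)) ≤ hilbertDist x y := by
  haveI : Nonempty (Fin K) := ⟨⟨0, hK⟩⟩
  rw [hilbertDist_eq hK hx hy]
  have h1 : x i / y i ≤ ⨆ k, x k / y k := le_ciSup (f := fun k => x k / y k) (Finite.bddAbove_range _) i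
  have h2 : ⨅ k, x k / y k ≤ x j / y j := ciInf_le (Finite.bddBelow_range _) j
  rw [Real.log_div (div_pos (hx i) (hy i)).ne' (div_pos (hx j) (hy j)).ne']
  have l1 := Real.log_le_log (div_pos (hx i) (hy i)) h1
  have l2 := Real.log_le_log (iInf_ratio_pos hK hx hy) h2
  linarith

/-- hilbertDist is attained at a pair of indices -/
lemma hilbertDist_attained (hK : 0 < K) {x y : Fin K → ℝ} (hx : ∀ i, 0 < x i)
    (hy : ∀ i, 0 < y i) :
    ∃ p q : Fin K, hilbertDist x y = Real.log ((x p / y p) / (x q / y q)) := by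
  haveI : Nonempty (Fin K) := ⟨⟨0, hK⟩⟩
  obtain ⟨p, hp⟩ := Finite.exists_max (fun i => x i / y i)
  obtain ⟨q, hq⟩ := Finite.exists_min (fun i => x i / y i)
  refine ⟨p, q, ?_⟩
  have e1 : ⨆ i, x i / y i = x p / y p :=
    le_antisymm (ciSup_le hp) (le_ciSup (f := fun k => x k / y k) (Finite.bddAbove_range _) p)
  have e2 : ⨅ i, x i / y i = x q / y q :=
    le_antisymm (ciInf_le (Finite.bddBelow_range _) q) (le_ciInf hq)
  rw [hilbertDist, e1, e2]


/-- The core cross-ratio inequality (Birkhoff). -/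
lemma cross_ratio_le (hK : 0 < K) {a b x y : Fin K → ℝ}
    (ha : ∀ i, 0 < a i) (hb : ∀ i, 0 < b i) (hx : ∀ i, 0 < x i) (hy : ∀ i, 0 < y i)
    {lam Lam : ℝ} (hlam : 0 < lam) (hρ1 : ∀ k, lam ≤ b k / a k) (hρ2 : ∀ k, b k / a k ≤ Lam) :
    Real.log (((∑ i, a i * x i) * (∑ i, b i * y i)) / ((∑ i, a i * y i) * (∑ i, b i * x i)))
      ≤ (Real.sqrt Lam - Real.sqrt lam) / (Real.sqrt Lam + Real.sqrt lam) * hilbertDist x y := by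
  haveI : Nonempty (Fin K) := ⟨⟨0, hK⟩⟩
  set t := (Real.sqrt Lam - Real.sqrt lam) / (Real.sqrt Lam + Real.sqrt lam) with htdef
  set L : Fin K → ℝ := fun i => Real.log (x i / y i) with hLdef
  set l0 : ℝ := Real.log (⨅ i, x i / y i) with hl0def
  set l1 : ℝ := Real.log (⨆ i, x i / y i) with hl1def
  have hL1 : ∀ i, l0 ≤ L i := fun i =>
    Real.log_le_log (iInf_ratio_pos hK hx hy) (ciInf_le (Finite.bddBelow_range _) i)
  have hL2 : ∀ i, L i ≤ l1 := fun i =>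
    Real.log_le_log (div_pos (hx i) (hy i))
      (le_ciSup (f := fun k => x k / y k) (Finite.bddAbove_range _) i)
  have hdxy : hilbertDist x y = l1 - l0 := hilbertDist_eq hK hx hy
  -- the interpolation path
  set F : ℝ → ℝ := fun s => ∑ i, a i * y i * Real.exp (s * L i) with hFdef
  set G : ℝ → ℝ := fun s => ∑ i, b i * y i * Real.exp (s * L i) with hGdef
  set F' : ℝ → ℝ := fun s => ∑ i, a i * y i * Real.exp (s * L i) * L i with hF'def
  set G' : ℝ → ℝ := fun s => ∑ i, b i * y i * Real.exp (s * L i) * L i with hG'def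
  have hFpos : ∀ s, 0 < F s := fun s =>
    Finset.sum_pos (fun i _ => mul_pos (mul_pos (ha i) (hy i)) (Real.exp_pos _)) Finset.univ_nonempty
  have hGpos : ∀ s, 0 < G s := fun s =>
    Finset.sum_pos (fun i _ => mul_pos (mul_pos (hb i) (hy i)) (Real.exp_pos _)) Finset.univ_nonempty
  have hFd : ∀ s, HasDerivAt F (F' s) s := by
    intro s
    apply HasDerivAt.fun_sum
    intro i _
    have h1 : HasDerivAt (fun s : ℝ => s * L i) (L i) s := by
      simpa using (hasDerivAt_id s).mul_const (L i)
    have h2 : HasDerivAt (fun s : ℝ => Real.exp (s * L i)) (Real.exp (s * L i) * L i) s :=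
      h1.exp
    simpa [mul_assoc] using h2.const_mul (a i * y i)
  have hGd : ∀ s, HasDerivAt G (G' s) s := by
    intro s
    apply HasDerivAt.fun_sum
    intro i _
    have h1 : HasDerivAt (fun s : ℝ => s * L i) (L i) s := by
      simpa using (hasDerivAt_id s).mul_const (L i)
    have h2 : HasDerivAt (fun s : ℝ => Real.exp (s * L i)) (Real.exp (s * L i) * L i) s :=
      h1.exp
    simpa [mul_assoc] using h2.const_mul (b i * y i)
  set φ : ℝ → ℝ := fun s => Real.log (F s) - Real.log (G s) with hφdef
  set φ' : ℝ → ℝ := fun s => F' s / F s - G' s / G s with hφ'def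
  have hφd : ∀ s, HasDerivAt φ (φ' s) s := fun s =>
    ((hFd s).log (hFpos s).ne').sub ((hGd s).log (hGpos s).ne')
  -- bound on the derivative via mad_core
  have hbound : ∀ s, |φ' s| ≤ t * (l1 - l0) := by
    intro s
    have := mad_core hK (fun i => a i * y i * Real.exp (s * L i)) (fun i => b i / a i) L
      (fun i => mul_pos (mul_pos (ha i) (hy i)) (Real.exp_pos _)) hlam hρ1 hρ2 hL1 hL2
    rw [← htdef] at this
    have e1 : ∑ i, a i * y i * Real.exp (s * L i) * (b i / a i) = G s := by
      apply Finset.sum_congr rfl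
      intro i _
      field_simp [(ha i).ne']
    have e2 : ∑ i, a i * y i * Real.exp (s * L i) * (b i / a i) * L i = G' s := by
      apply Finset.sum_congr rfl
      intro i _
      field_simp [(ha i).ne']
    rw [e1, e2] at this
    simpa [hφ'def, hF'def, hFdef] using this
  -- MVT
  have hosc : 0 ≤ l1 - l0 := by
    have := hL1 ⟨0, hK⟩; have := hL2 ⟨0, hK⟩; linarith
  have ht0 : 0 ≤ t := by
    have h0 : 0 < lam := hlam
    have h1 : lam ≤ Lam := le_trans (hρ1 ⟨0, hK⟩) (hρ2 ⟨0, hK⟩)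
    have := Real.sqrt_le_sqrt h1
    have := Real.sqrt_pos.mpr h0
    exact div_nonneg (by linarith) (by linarith)
  have hmvt : ‖φ 1 - φ 0‖ ≤ t * (l1 - l0) * (1 - 0) := by
    have h := norm_image_sub_le_of_norm_deriv_le_segment'
      (f := φ) (f' := φ') (C := t * (l1 - l0)) (a := 0) (b := 1)
      (fun z _ => (hφd z).hasDerivWithinAt)
      (fun z _ => by rw [Real.norm_eq_abs]; exact hbound z)
    exact h 1 (by norm_num)
  have hφ1 : φ 1 = Real.log (∑ i, a i * x i) - Real.log (∑ i, b i * x i) := by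
    have ex : ∀ i, a i * y i * Real.exp (1 * L i) = a i * x i := by
      intro i
      rw [one_mul, hLdef]
      rw [Real.exp_log (div_pos (hx i) (hy i))]
      field_simp [(hy i).ne']
    have ex2 : ∀ i, b i * y i * Real.exp (1 * L i) = b i * x i := by
      intro i
      rw [one_mul, hLdef]
      rw [Real.exp_log (div_pos (hx i) (hy i))]
      field_simp [(hy i).ne']
    simp only [hφdef, hFdef, hGdef]
    rw [Finset.sum_congr rfl (fun i _ => ex i), Finset.sum_congr rfl (fun i _ => ex2 i)]
  have hφ0 : φ 0 = Real.log (∑ i, a i * y i) - Real.log (∑ i, b i * y i) := by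
    simp only [hφdef, hFdef, hGdef]
    norm_num
  have hax : 0 < ∑ i, a i * x i :=
    Finset.sum_pos (fun i _ => mul_pos (ha i) (hx i)) Finset.univ_nonempty
  have hay : 0 < ∑ i, a i * y i :=
    Finset.sum_pos (fun i _ => mul_pos (ha i) (hy i)) Finset.univ_nonempty
  have hbx : 0 < ∑ i, b i * x i :=
    Finset.sum_pos (fun i _ => mul_pos (hb i) (hx i)) Finset.univ_nonempty
  have hby : 0 < ∑ i, b i * y i :=
    Finset.sum_pos (fun i _ => mul_pos (hb i) (hy i)) Finset.univ_nonempty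
  have hlogeq : Real.log (((∑ i, a i * x i) * (∑ i, b i * y i)) / ((∑ i, a i * y i) * (∑ i, b i * x i)))
      = φ 1 - φ 0 := by
    rw [Real.log_div (by positivity) (by positivity), Real.log_mul hax.ne' hby.ne',
      Real.log_mul hay.ne' hbx.ne', hφ1, hφ0]
    ring
  rw [hlogeq, hdxy]
  calc φ 1 - φ 0 ≤ |φ 1 - φ 0| := le_abs_self _
    _ ≤ t * (l1 - l0) * (1 - 0) := by rw [← Real.norm_eq_abs]; exact hmvt
    _ = t * (l1 - l0) := by ring


/-- max cross ratio of a positive matrix -/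
noncomputable def crMax {K : ℕ} (M : Matrix (Fin K) (Fin K) ℝ) : ℝ :=
  ⨆ p : (Fin K × Fin K) × Fin K × Fin K,
    M p.2.1 p.1.1 * M p.2.2 p.1.2 / (M p.2.2 p.1.1 * M p.2.1 p.1.2)

variable {K : ℕ}

lemma crMax_attained (hK : 0 < K) (M : Matrix (Fin K) (Fin K) ℝ) :
    ∃ p : (Fin K × Fin K) × Fin K × Fin K,
      crMax M = M p.2.1 p.1.1 * M p.2.2 p.1.2 / (M p.2.2 p.1.1 * M p.2.1 p.1.2) ∧
      ∀ q : (Fin K × Fin K) × Fin K × Fin K,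
        M q.2.1 q.1.1 * M q.2.2 q.1.2 / (M q.2.2 q.1.1 * M q.2.1 q.1.2)
          ≤ M p.2.1 p.1.1 * M p.2.2 p.1.2 / (M p.2.2 p.1.1 * M p.2.1 p.1.2) := by
  haveI : Nonempty (Fin K) := ⟨⟨0, hK⟩⟩
  obtain ⟨p, hp⟩ := Finite.exists_max
    (fun p : (Fin K × Fin K) × Fin K × Fin K =>
      M p.2.1 p.1.1 * M p.2.2 p.1.2 / (M p.2.2 p.1.1 * M p.2.1 p.1.2))
  exact ⟨p, le_antisymm (ciSup_le hp)
    (le_ciSup (f := fun q : (Fin K × Fin K) × Fin K × Fin K =>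
      M q.2.1 q.1.1 * M q.2.2 q.1.2 / (M q.2.2 q.1.1 * M q.2.1 q.1.2))
      (Finite.bddAbove_range _) p), hp⟩

lemma le_crMax (hK : 0 < K) (M : Matrix (Fin K) (Fin K) ℝ) (i j k l : Fin K) :
    M k i * M l j / (M l i * M k j) ≤ crMax M := by
  haveI : Nonempty (Fin K) := ⟨⟨0, hK⟩⟩
  exact le_ciSup (f := fun q : (Fin K × Fin K) × Fin K × Fin K =>
      M q.2.1 q.1.1 * M q.2.2 q.1.2 / (M q.2.2 q.1.1 * M q.2.1 q.1.2))
    (Finite.bddAbove_range _) ((i, j), k, l)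

lemma one_le_crMax (hK : 0 < K) (M : Matrix (Fin K) (Fin K) ℝ) (hM : ∀ i j, 0 < M i j) :
    1 ≤ crMax M := by
  have h := le_crMax hK M ⟨0, hK⟩ ⟨0, hK⟩ ⟨0, hK⟩ ⟨0, hK⟩
  rw [div_self (by have := hM ⟨0, hK⟩ ⟨0, hK⟩; positivity)] at h
  exact h

lemma crMax_transpose (hK : 0 < K) (M : Matrix (Fin K) (Fin K) ℝ) :
    crMax (Matrix.transpose M) = crMax M := by
  haveI : Nonempty (Fin K) := ⟨⟨0, hK⟩⟩
  apply le_antisymm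
  · apply ciSup_le
    intro p
    simpa [Matrix.transpose_apply, mul_comm] using le_crMax hK M p.2.1 p.2.2 p.1.1 p.1.2
  · apply ciSup_le
    intro p
    simpa [Matrix.transpose_apply, mul_comm] using le_crMax hK M.transpose p.2.1 p.2.2 p.1.1 p.1.2


lemma const_mono {lam Lam R : ℝ} (hl : 0 < lam) (hlL : lam ≤ Lam) (h : Lam ≤ R * lam)
    (hR : 1 ≤ R) :
    (Real.sqrt Lam - Real.sqrt lam) / (Real.sqrt Lam + Real.sqrt lam)
      ≤ (Real.sqrt R - 1) / (Real.sqrt R + 1) := by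
  have hR0 : (0:ℝ) ≤ R := le_trans zero_le_one hR
  have h1 : Real.sqrt Lam ≤ Real.sqrt R * Real.sqrt lam := by
    rw [← Real.sqrt_mul hR0]
    exact Real.sqrt_le_sqrt h
  have h2 : 0 < Real.sqrt lam := Real.sqrt_pos.mpr hl
  have h3 : 0 < Real.sqrt Lam := Real.sqrt_pos.mpr (lt_of_lt_of_le hl hlL)
  have h4 : (1:ℝ) ≤ Real.sqrt R := by
    rw [show (1:ℝ) = Real.sqrt 1 by simp]
    exact Real.sqrt_le_sqrt hR
  rw [div_le_div_iff₀ (by positivity) (by positivity)]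
  nlinarith [h1, h2, h3, h4]

lemma vecMul_pos (hK : 0 < K) (M : Matrix (Fin K) (Fin K) ℝ) (hM : ∀ i j, 0 < M i j)
    {x : Fin K → ℝ} (hx : ∀ i, 0 < x i) : ∀ j, 0 < Matrix.vecMul x M j := by
  haveI : Nonempty (Fin K) := ⟨⟨0, hK⟩⟩
  intro j
  have : Matrix.vecMul x M j = ∑ i, x i * M i j := by simp [Matrix.vecMul, dotProduct]
  rw [this]
  exact Finset.sum_pos (fun i _ => mul_pos (hx i) (hM i j)) Finset.univ_nonempty

lemma hilbert_contract (hK : 0 < K) (M : Matrix (Fin K) (Fin K) ℝ) (hM : ∀ i j, 0 < M i j)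
    {x y : Fin K → ℝ} (hx : ∀ i, 0 < x i) (hy : ∀ i, 0 < y i) :
    hilbertDist (Matrix.vecMul x M) (Matrix.vecMul y M)
      ≤ (Real.sqrt (crMax M) - 1) / (Real.sqrt (crMax M) + 1) * hilbertDist x y := by
  haveI : Nonempty (Fin K) := ⟨⟨0, hK⟩⟩
  have hvm : ∀ (z : Fin K → ℝ) (j : Fin K), Matrix.vecMul z M j = ∑ i, z i * M i j := by
    intro z j; simp [Matrix.vecMul, dotProduct]
  have hxM := vecMul_pos hK M hM hx
  have hyM := vecMul_pos hK M hM hy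
  obtain ⟨p, q, hpq⟩ := hilbertDist_attained hK hxM hyM
  -- the columns p and q
  set a : Fin K → ℝ := fun k => M k p with hadef
  set b : Fin K → ℝ := fun k => M k q with hbdef
  have ha : ∀ k, 0 < a k := fun k => hM k p
  have hb : ∀ k, 0 < b k := fun k => hM k q
  set lam : ℝ := ⨅ k, b k / a k with hlamdef
  set Lam : ℝ := ⨆ k, b k / a k with hLamdef
  have hlam : 0 < lam := iInf_ratio_pos hK hb ha
  have hρ1 : ∀ k, lam ≤ b k / a k := fun k => ciInf_le (Finite.bddBelow_range _) k
  have hρ2 : ∀ k, b k / a k ≤ Lam := fun k =>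
    le_ciSup (f := fun k => b k / a k) (Finite.bddAbove_range _) k
  have hlamLam : lam ≤ Lam := le_trans (hρ1 ⟨0, hK⟩) (hρ2 ⟨0, hK⟩)
  -- Lam ≤ crMax M * lam
  have hLR : Lam ≤ crMax M * lam := by
    obtain ⟨k1, hk1⟩ := Finite.exists_max (fun k => b k / a k)
    obtain ⟨k2, hk2⟩ := Finite.exists_min (fun k => b k / a k)
    have eL : Lam = b k1 / a k1 :=
      le_antisymm (ciSup_le hk1) (le_ciSup (f := fun k => b k / a k) (Finite.bddAbove_range _) k1)
    have el : lam = b k2 / a k2 :=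
      le_antisymm (ciInf_le (Finite.bddBelow_range _) k2) (le_ciInf hk2)
    have h := le_crMax hK M q p k1 k2
    rw [div_le_iff₀ (by have := hM k2 q; have := hM k1 p; positivity)] at h
    rw [eL, el, show crMax M * (b k2 / a k2) = crMax M * b k2 / a k2 by ring,
      div_le_div_iff₀ (ha k1) (ha k2)]
    have hb1 : b k1 = M k1 q := rfl
    have hb2 : b k2 = M k2 q := rfl
    have ha1 : a k1 = M k1 p := rfl
    have ha2 : a k2 = M k2 p := rfl
    rw [hb1, hb2, ha1, ha2]
    nlinarith [h]
  have hR1 : 1 ≤ crMax M := one_le_crMax hK M hM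
  have hle := cross_ratio_le hK ha hb hx hy hlam hρ1 hρ2
  have harg : (Matrix.vecMul x M p / Matrix.vecMul y M p) / (Matrix.vecMul x M q / Matrix.vecMul y M q)
      = ((∑ i, a i * x i) * (∑ i, b i * y i)) / ((∑ i, a i * y i) * (∑ i, b i * x i)) := by
    rw [hvm x p, hvm y p, hvm x q, hvm y q]
    have c1 : ∑ i, x i * M i p = ∑ i, a i * x i := Finset.sum_congr rfl fun i _ => mul_comm _ _
    have c2 : ∑ i, y i * M i p = ∑ i, a i * y i := Finset.sum_congr rfl fun i _ => mul_comm _ _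
    have c3 : ∑ i, x i * M i q = ∑ i, b i * x i := Finset.sum_congr rfl fun i _ => mul_comm _ _
    have c4 : ∑ i, y i * M i q = ∑ i, b i * y i := Finset.sum_congr rfl fun i _ => mul_comm _ _
    rw [c1, c2, c3, c4]
    have hax : 0 < ∑ i, a i * x i :=
      Finset.sum_pos (fun i _ => mul_pos (ha i) (hx i)) Finset.univ_nonempty
    have hay : 0 < ∑ i, a i * y i :=
      Finset.sum_pos (fun i _ => mul_pos (ha i) (hy i)) Finset.univ_nonempty
    have hbx : 0 < ∑ i, b i * x i :=
      Finset.sum_pos (fun i _ => mul_pos (hb i) (hx i)) Finset.univ_nonempty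
    have hby : 0 < ∑ i, b i * y i :=
      Finset.sum_pos (fun i _ => mul_pos (hb i) (hy i)) Finset.univ_nonempty
    field_simp
  calc hilbertDist (Matrix.vecMul x M) (Matrix.vecMul y M)
      = Real.log (((∑ i, a i * x i) * (∑ i, b i * y i)) / ((∑ i, a i * y i) * (∑ i, b i * x i))) := by
        rw [hpq, harg]
    _ ≤ (Real.sqrt Lam - Real.sqrt lam) / (Real.sqrt Lam + Real.sqrt lam) * hilbertDist x y := hle
    _ ≤ (Real.sqrt (crMax M) - 1) / (Real.sqrt (crMax M) + 1) * hilbertDist x y := by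
        exact mul_le_mul_of_nonneg_right (const_mono hlam hlamLam hLR hR1)
          (hilbertDist_nonneg hK hx hy)

lemma birkhoff_bddAbove (hK : 0 < K) (M : Matrix (Fin K) (Fin K) ℝ) (hM : ∀ i j, 0 < M i j) :
    ∀ t ∈ {t : ℝ | ∃ x y : Fin K → ℝ, (∀ i, 0 < x i) ∧ (∀ i, 0 < y i) ∧
      0 < hilbertDist x y ∧
      t = hilbertDist (Matrix.vecMul x M) (Matrix.vecMul y M) / hilbertDist x y},
      t ≤ (Real.sqrt (crMax M) - 1) / (Real.sqrt (crMax M) + 1) := by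
  rintro t ⟨x, y, hx, hy, hd, rfl⟩
  rw [div_le_iff₀ hd]
  exact hilbert_contract hK M hM hx hy

lemma birkhoff_le (hK : 0 < K) (M : Matrix (Fin K) (Fin K) ℝ) (hM : ∀ i j, 0 < M i j) :
    birkhoff M ≤ (Real.sqrt (crMax M) - 1) / (Real.sqrt (crMax M) + 1) := by
  apply Real.sSup_le (birkhoff_bddAbove hK M hM)
  have hR1 : 1 ≤ crMax M := one_le_crMax hK M hM
  have h4 : (1:ℝ) ≤ Real.sqrt (crMax M) := by
    rw [show (1:ℝ) = Real.sqrt 1 by simp]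
    exact Real.sqrt_le_sqrt hR1
  have : (0:ℝ) < Real.sqrt (crMax M) + 1 := by linarith
  exact div_nonneg (by linarith) (by linarith)


lemma sum_split (hK : 0 < K) {k0 l0 : Fin K} (hkl : k0 ≠ l0) (α β γ : ℝ) (f : Fin K → ℝ) :
    ∑ i, (if i = k0 then α else if i = l0 then β else γ) * f i
      = α * f k0 + β * f l0 + γ * ∑ i ∈ Finset.univ \ {k0, l0}, f i := by
  have hun : ({k0, l0} : Finset (Fin K)) ∪ (Finset.univ \ {k0, l0}) = Finset.univ := by
    rw [Finset.union_sdiff_of_subset (Finset.subset_univ _)]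
  have hdisj : Disjoint ({k0, l0} : Finset (Fin K)) (Finset.univ \ {k0, l0}) :=
    Finset.disjoint_sdiff
  conv_lhs => rw [← hun]
  rw [Finset.sum_union hdisj, Finset.sum_pair hkl]
  have h1 : (if k0 = k0 then α else if k0 = l0 then β else γ) = α := if_pos rfl
  have h2 : (if l0 = k0 then α else if l0 = l0 then β else γ) = β := by
    rw [if_neg (Ne.symm hkl), if_pos rfl]
  have h3 : ∑ i ∈ Finset.univ \ {k0, l0}, (if i = k0 then α else if i = l0 then β else γ) * f i
      = γ * ∑ i ∈ Finset.univ \ {k0, l0}, f i := by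
    rw [Finset.mul_sum]
    apply Finset.sum_congr rfl
    intro i hi
    rw [Finset.mem_sdiff, Finset.mem_insert, Finset.mem_singleton] at hi
    push_neg at hi
    rw [if_neg hi.2.1, if_neg hi.2.2]
  rw [h1, h2, h3]

set_option maxHeartbeats 1000000 in
lemma le_birkhoff (hK : 0 < K) (M : Matrix (Fin K) (Fin K) ℝ) (hM : ∀ i j, 0 < M i j) :
    (Real.sqrt (crMax M) - 1) / (Real.sqrt (crMax M) + 1) ≤ birkhoff M := by
  haveI : Nonempty (Fin K) := ⟨⟨0, hK⟩⟩
  have hvm : ∀ (z : Fin K → ℝ) (j : Fin K), Matrix.vecMul z M j = ∑ i, z i * M i j := by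
    intro z j; simp [Matrix.vecMul, dotProduct]
  set S : Set ℝ := {t : ℝ | ∃ x y : Fin K → ℝ, (∀ i, 0 < x i) ∧ (∀ i, 0 < y i) ∧
    0 < hilbertDist x y ∧
    t = hilbertDist (Matrix.vecMul x M) (Matrix.vecMul y M) / hilbertDist x y} with hSdef
  have hbirk : birkhoff M = sSup S := rfl
  have hBdd : BddAbove S :=
    ⟨(Real.sqrt (crMax M) - 1) / (Real.sqrt (crMax M) + 1),
      fun t ht => birkhoff_bddAbove hK M hM t ht⟩
  have hR1 := one_le_crMax hK M hM
  rcases eq_or_lt_of_le hR1 with hR | hR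
  · rw [← hR]
    simp only [Real.sqrt_one, sub_self, zero_div]
    rcases Set.eq_empty_or_nonempty S with hemp | ⟨t, ht⟩
    · rw [hbirk, hemp, Real.sSup_empty]
    · have ht2 := ht
      obtain ⟨x, y, hx, hy, hd, htval⟩ := ht2
      have h0 : 0 ≤ t := by
        rw [htval]
        exact div_nonneg
          (hilbertDist_nonneg hK (vecMul_pos hK M hM hx) (vecMul_pos hK M hM hy)) hd.le
      exact le_trans h0 (le_csSup hBdd ht)
  · obtain ⟨p, hRt, -⟩ := crMax_attained hK M
    obtain ⟨⟨i0, j0⟩, k0, l0⟩ := p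
    simp only at hRt
    set A := M k0 i0 with hA0
    set B := M k0 j0 with hB0
    set C := M l0 i0 with hC0
    set D := M l0 j0 with hD0
    have hA : 0 < A := hM k0 i0
    have hB : 0 < B := hM k0 j0
    have hC : 0 < C := hM l0 i0
    have hD : 0 < D := hM l0 j0
    have hkl : k0 ≠ l0 := by
      intro h
      have hac : A = C := by rw [hA0, hC0, h]
      have hbd : B = D := by rw [hB0, hD0, h]
      rw [hac, hbd, mul_comm C D, div_self (mul_pos hD hC).ne'] at hRt
      exact absurd hRt (by linarith)
    set sa := Real.sqrt A with hsadef
    set sb := Real.sqrt B with hsbdef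
    set sc := Real.sqrt C with hscdef
    set sd := Real.sqrt D with hsddef
    have hsa : 0 < sa := Real.sqrt_pos.mpr hA
    have hsb : 0 < sb := Real.sqrt_pos.mpr hB
    have hsc : 0 < sc := Real.sqrt_pos.mpr hC
    have hsd : 0 < sd := Real.sqrt_pos.mpr hD
    have hsa2 : sa * sa = A := Real.mul_self_sqrt hA.le
    have hsb2 : sb * sb = B := Real.mul_self_sqrt hB.le
    have hsc2 : sc * sc = C := Real.mul_self_sqrt hC.le
    have hsd2 : sd * sd = D := Real.mul_self_sqrt hD.le
    set c' := (sa * sd - sb * sc) / (sa * sd + sb * sc) with hc'def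
    have hspos : 0 < sa * sd + sb * sc := by positivity
    have htarget : (Real.sqrt (crMax M) - 1) / (Real.sqrt (crMax M) + 1) = c' := by
      rw [hRt, Real.sqrt_div (mul_pos hA hD).le _, Real.sqrt_mul hA.le, Real.sqrt_mul hC.le,
        ← hsadef, ← hsbdef, ← hscdef, ← hsddef, hc'def]
      rw [div_eq_div_iff
        (add_pos (div_pos (mul_pos hsa hsd) (mul_pos hsc hsb)) one_pos).ne' hspos.ne']
      field_simp [(mul_pos hsc hsb).ne']
    set g : ℝ → ℝ := fun w => Real.log (A * Real.exp w + C) - Real.log (B * Real.exp w + D)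
      with hgdef
    have hgd : ∀ w, HasDerivAt g
        (A * Real.exp w / (A * Real.exp w + C) - B * Real.exp w / (B * Real.exp w + D)) w := by
      intro w
      have d1 : HasDerivAt (fun w : ℝ => A * Real.exp w + C) (A * Real.exp w) w :=
        ((Real.hasDerivAt_exp w).const_mul A).add_const C
      have d2 : HasDerivAt (fun w : ℝ => B * Real.exp w + D) (B * Real.exp w) w :=
        ((Real.hasDerivAt_exp w).const_mul B).add_const D
      have p1 : A * Real.exp w + C ≠ 0 := (add_pos (mul_pos hA (Real.exp_pos w)) hC).ne'
      have p2 : B * Real.exp w + D ≠ 0 := (add_pos (mul_pos hB (Real.exp_pos w)) hD).ne'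
      exact (d1.log p1).sub (d2.log p2)
    set w0 := Real.log (sc * sd / (sa * sb)) with hw0def
    have hX : Real.exp w0 = sc * sd / (sa * sb) :=
      Real.exp_log (div_pos (mul_pos hsc hsd) (mul_pos hsa hsb))
    have hg'0 : A * Real.exp w0 / (A * Real.exp w0 + C) - B * Real.exp w0 / (B * Real.exp w0 + D)
        = c' := by
      rw [hX, hc'def, ← hsa2, ← hsb2, ← hsc2, ← hsd2]
      have h1 : sa * sa * (sc * sd / (sa * sb)) + sc * sc = sc / sb * (sa * sd + sb * sc) := by
        field_simp [hsa.ne', hsb.ne']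
      have h2 : sb * sb * (sc * sd / (sa * sb)) + sd * sd = sd / sa * (sb * sc + sa * sd) := by
        field_simp [hsa.ne', hsb.ne']
      rw [h1, h2]
      have hden1 : sc / sb * (sa * sd + sb * sc) ≠ 0 := (mul_pos (div_pos hsc hsb) hspos).ne'
      have hden2 : sd / sa * (sb * sc + sa * sd) ≠ 0 :=
        (mul_pos (div_pos hsd hsa) (by linarith : (0:ℝ) < sb * sc + sa * sd)).ne'
      field_simp [hsa.ne', hsb.ne', hsc.ne', hsd.ne', hden1, hden2, hspos.ne']
      ring
    have hd0 : HasDerivAt g c' w0 := by rw [← hg'0]; exact hgd w0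
    -- step A : difference quotients are dominated by birkhoff M
    have stepA : ∀ h : ℝ, 0 < h → (g (w0 + h) - g (w0 - h)) / (2 * h) ≤ birkhoff M := by
      intro h hh
      set u := Real.exp (w0 + h) with hu
      set v := Real.exp (w0 - h) with hv
      have hu0 : 0 < u := Real.exp_pos _
      have hv0 : 0 < v := Real.exp_pos _
      have huv : v < u := by rw [hu, hv]; exact Real.exp_lt_exp.mpr (by linarith only [hh])
      have huv1 : 1 < u / v := (one_lt_div hv0).mpr huv
      have hlog : Real.log (u / v) = 2 * h := by
        rw [Real.log_div hu0.ne' hv0.ne', hu, hv, Real.log_exp, Real.log_exp]; ring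
      have h2h : (0:ℝ) < 2 * h := by linarith only [hh]
      set T : Fin K → ℝ := fun c => ∑ i ∈ Finset.univ \ {k0, l0}, M i c with hTdef
      -- the test vectors
      set xx : ℝ → Fin K → ℝ := fun ε i => if i = k0 then u else if i = l0 then 1 else ε
        with hxxdef
      set yy : ℝ → Fin K → ℝ := fun ε i => if i = k0 then v else if i = l0 then 1 else ε
        with hyydef
      have hxxpos : ∀ ε : ℝ, 0 < ε → ∀ i, 0 < xx ε i := by
        intro ε hε i
        simp only [hxxdef]
        split_ifs
        · exact hu0
        · norm_num
        · exact hε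
      have hyypos : ∀ ε : ℝ, 0 < ε → ∀ i, 0 < yy ε i := by
        intro ε hε i
        simp only [hyydef]
        split_ifs
        · exact hv0
        · norm_num
        · exact hε
      have hratio : ∀ ε : ℝ, 0 < ε → ∀ i, xx ε i / yy ε i = if i = k0 then u / v else 1 := by
        intro ε hε i
        simp only [hxxdef, hyydef]
        split_ifs
        · rfl
        · norm_num
        · exact div_self hε.ne'
      have hdist : ∀ ε : ℝ, 0 < ε → hilbertDist (xx ε) (yy ε) = 2 * h := by
        intro ε hε
        have hsup : ⨆ i, xx ε i / yy ε i = u / v := by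
          apply le_antisymm
          · apply ciSup_le
            intro i
            rw [hratio ε hε i]
            split_ifs
            · exact le_refl _
            · exact le_of_lt huv1
          · have h5 := le_ciSup (f := fun i => xx ε i / yy ε i) (Finite.bddAbove_range _) k0
            rwa [hratio ε hε k0, if_pos rfl] at h5
        have hinf : ⨅ i, xx ε i / yy ε i = 1 := by
          apply le_antisymm
          · have h5 := ciInf_le (f := fun i => xx ε i / yy ε i) (Finite.bddBelow_range _) l0
            rwa [hratio ε hε l0, if_neg (Ne.symm hkl)] at h5
          · apply le_ciInf
            intro i
            rw [hratio ε hε i]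
            split_ifs
            · exact le_of_lt huv1
            · exact le_refl _
        rw [hilbertDist, hsup, hinf, div_one, hlog]
      have hmem : ∀ ε : ℝ, 0 < ε →
          hilbertDist (Matrix.vecMul (xx ε) M) (Matrix.vecMul (yy ε) M) / (2 * h) ∈ S := by
        intro ε hε
        refine ⟨xx ε, yy ε, hxxpos ε hε, hyypos ε hε, ?_, ?_⟩
        · rw [hdist ε hε]; exact h2h
        · rw [hdist ε hε]
      have hsplitx : ∀ (ε : ℝ) (c : Fin K),
          Matrix.vecMul (xx ε) M c = u * M k0 c + 1 * M l0 c + ε * T c := by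
        intro ε c
        rw [hvm, hTdef]
        simp only [hxxdef]
        exact sum_split hK hkl u 1 ε (fun i => M i c)
      have hsplity : ∀ (ε : ℝ) (c : Fin K),
          Matrix.vecMul (yy ε) M c = v * M k0 c + 1 * M l0 c + ε * T c := by
        intro ε c
        rw [hvm, hTdef]
        simp only [hyydef]
        exact sum_split hK hkl v 1 ε (fun i => M i c)
      have key : ∀ ε : ℝ, 0 < ε →
          Real.log (((u * A + 1 * C + ε * T i0) / (v * A + 1 * C + ε * T i0)) /
            ((u * B + 1 * D + ε * T j0) / (v * B + 1 * D + ε * T j0))) / (2 * h)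
            ≤ birkhoff M := by
        intro ε hε
        have hxM := vecMul_pos hK M hM (hxxpos ε hε)
        have hyM := vecMul_pos hK M hM (hyypos ε hε)
        have hprobe := probe_le_hilbertDist hK hxM hyM i0 j0
        rw [hsplitx ε i0, hsplitx ε j0, hsplity ε i0, hsplity ε j0] at hprobe
        rw [← hA0, ← hB0, ← hC0, ← hD0] at hprobe
        calc Real.log (((u * A + 1 * C + ε * T i0) / (v * A + 1 * C + ε * T i0)) /
              ((u * B + 1 * D + ε * T j0) / (v * B + 1 * D + ε * T j0))) / (2 * h)
            ≤ hilbertDist (Matrix.vecMul (xx ε) M) (Matrix.vecMul (yy ε) M) / (2 * h) := by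
              exact div_le_div_of_nonneg_right hprobe h2h.le
          _ ≤ birkhoff M := by rw [hbirk]; exact le_csSup hBdd (hmem ε hε)
      -- limit as ε → 0⁺
      have hTpos : ∀ c, 0 ≤ T c := by
        intro c
        rw [hTdef]
        exact Finset.sum_nonneg fun i _ => (hM i c).le
      have hlim : Tendsto (fun ε : ℝ =>
          Real.log (((u * A + 1 * C + ε * T i0) / (v * A + 1 * C + ε * T i0)) /
            ((u * B + 1 * D + ε * T j0) / (v * B + 1 * D + ε * T j0))) / (2 * h)) (𝓝[>] (0:ℝ))
          (𝓝 ((g (w0 + h) - g (w0 - h)) / (2 * h))) := by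
        have l1 : Tendsto (fun ε : ℝ => u * A + 1 * C + ε * T i0) (𝓝 0) (𝓝 (u * A + 1 * C)) := by
          have hmul : Tendsto (fun ε : ℝ => ε * T i0) (𝓝 0) (𝓝 (0 * T i0)) :=
            tendsto_id.mul_const (T i0)
          simpa using tendsto_const_nhds.add hmul
        have l2 : Tendsto (fun ε : ℝ => v * A + 1 * C + ε * T i0) (𝓝 0) (𝓝 (v * A + 1 * C)) := by
          have hmul : Tendsto (fun ε : ℝ => ε * T i0) (𝓝 0) (𝓝 (0 * T i0)) :=
            tendsto_id.mul_const (T i0)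
          simpa using tendsto_const_nhds.add hmul
        have l3 : Tendsto (fun ε : ℝ => u * B + 1 * D + ε * T j0) (𝓝 0) (𝓝 (u * B + 1 * D)) := by
          have hmul : Tendsto (fun ε : ℝ => ε * T j0) (𝓝 0) (𝓝 (0 * T j0)) :=
            tendsto_id.mul_const (T j0)
          simpa using tendsto_const_nhds.add hmul
        have l4 : Tendsto (fun ε : ℝ => v * B + 1 * D + ε * T j0) (𝓝 0) (𝓝 (v * B + 1 * D)) := by
          have hmul : Tendsto (fun ε : ℝ => ε * T j0) (𝓝 0) (𝓝 (0 * T j0)) :=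
            tendsto_id.mul_const (T j0)
          simpa using tendsto_const_nhds.add hmul
        have hd1 : (0:ℝ) < u * A + 1 * C := by
          rw [one_mul]; exact add_pos (mul_pos hu0 hA) hC
        have hd2 : (0:ℝ) < v * A + 1 * C := by
          rw [one_mul]; exact add_pos (mul_pos hv0 hA) hC
        have hd3 : (0:ℝ) < u * B + 1 * D := by
          rw [one_mul]; exact add_pos (mul_pos hu0 hB) hD
        have hd4 : (0:ℝ) < v * B + 1 * D := by
          rw [one_mul]; exact add_pos (mul_pos hv0 hB) hD
        have larg : Tendsto (fun ε : ℝ =>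
            ((u * A + 1 * C + ε * T i0) / (v * A + 1 * C + ε * T i0)) /
              ((u * B + 1 * D + ε * T j0) / (v * B + 1 * D + ε * T j0))) (𝓝 0)
            (𝓝 (((u * A + 1 * C) / (v * A + 1 * C)) / ((u * B + 1 * D) / (v * B + 1 * D)))) :=
          (l1.div l2 hd2.ne').div (l3.div l4 hd4.ne') (div_pos hd3 hd4).ne'
        have hargpos : (0:ℝ) < ((u * A + 1 * C) / (v * A + 1 * C)) /
            ((u * B + 1 * D) / (v * B + 1 * D)) := div_pos (div_pos hd1 hd2) (div_pos hd3 hd4)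
        have llog : Tendsto (fun ε : ℝ =>
            Real.log (((u * A + 1 * C + ε * T i0) / (v * A + 1 * C + ε * T i0)) /
              ((u * B + 1 * D + ε * T j0) / (v * B + 1 * D + ε * T j0)))) (𝓝 0)
            (𝓝 (Real.log (((u * A + 1 * C) / (v * A + 1 * C)) /
              ((u * B + 1 * D) / (v * B + 1 * D))))) :=
          ((Real.continuousAt_log hargpos.ne').tendsto).comp larg
        have hval : Real.log (((u * A + 1 * C) / (v * A + 1 * C)) /
            ((u * B + 1 * D) / (v * B + 1 * D))) = g (w0 + h) - g (w0 - h) := by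
          have e1 : g (w0 + h) = Real.log (A * u + C) - Real.log (B * u + D) := by
            simp only [hgdef]
            rfl
          have e2 : g (w0 - h) = Real.log (A * v + C) - Real.log (B * v + D) := by
            simp only [hgdef]
            rfl
          rw [e1, e2,
            Real.log_div (div_pos hd1 hd2).ne' (div_pos hd3 hd4).ne',
            Real.log_div hd1.ne' hd2.ne', Real.log_div hd3.ne' hd4.ne']
          rw [show u * A + 1 * C = A * u + C by ring, show v * A + 1 * C = A * v + C by ring,
            show u * B + 1 * D = B * u + D by ring, show v * B + 1 * D = B * v + D by ring]
          ring
        rw [← hval]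
        exact (llog.div_const (2 * h)).mono_left nhdsWithin_le_nhds
      exact le_of_tendsto hlim
        (eventually_nhdsWithin_of_forall (fun ε hε => key ε hε))
    -- step B : difference quotients tend to the derivative
    have stepB : Tendsto (fun h : ℝ => (g (w0 + h) - g (w0 - h)) / (2 * h)) (𝓝[>] (0:ℝ))
        (𝓝 c') := by
      have hslope := hasDerivAt_iff_tendsto_slope.mp hd0
      have hmap1 : Tendsto (fun h : ℝ => w0 + h) (𝓝[>] (0:ℝ)) (𝓝[≠] w0) := by
        apply tendsto_nhdsWithin_of_tendsto_nhds_of_eventually_within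
        · have hcont : Tendsto (fun h : ℝ => w0 + h) (𝓝 0) (𝓝 (w0 + 0)) :=
            (continuous_const.add continuous_id).tendsto 0
          simpa using hcont.mono_left nhdsWithin_le_nhds
        · filter_upwards [self_mem_nhdsWithin] with z hz
          simp only [Set.mem_compl_iff, Set.mem_singleton_iff]
          intro hcon
          have : z = 0 := by linarith only [hcon]
          exact absurd this (ne_of_gt hz)
      have hmap2 : Tendsto (fun h : ℝ => w0 - h) (𝓝[>] (0:ℝ)) (𝓝[≠] w0) := by
        apply tendsto_nhdsWithin_of_tendsto_nhds_of_eventually_within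
        · have hcont : Tendsto (fun h : ℝ => w0 - h) (𝓝 0) (𝓝 (w0 - 0)) :=
            (continuous_const.sub continuous_id).tendsto 0
          simpa using hcont.mono_left nhdsWithin_le_nhds
        · filter_upwards [self_mem_nhdsWithin] with z hz
          simp only [Set.mem_compl_iff, Set.mem_singleton_iff]
          intro hcon
          have : z = 0 := by linarith only [hcon]
          exact absurd this (ne_of_gt hz)
      have s1 : Tendsto (fun h : ℝ => slope g w0 (w0 + h)) (𝓝[>] (0:ℝ)) (𝓝 c') := by
        have := hslope.comp hmap1
        simpa [Function.comp_def] using this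
      have s2 : Tendsto (fun h : ℝ => slope g w0 (w0 - h)) (𝓝[>] (0:ℝ)) (𝓝 c') := by
        have := hslope.comp hmap2
        simpa [Function.comp_def] using this
      have s3 : Tendsto (fun h : ℝ => (slope g w0 (w0 + h) + slope g w0 (w0 - h)) / 2)
          (𝓝[>] (0:ℝ)) (𝓝 ((c' + c') / 2)) := (s1.add s2).div_const 2
      have hcc : (c' + c') / 2 = c' := by ring
      rw [hcc] at s3
      apply Filter.Tendsto.congr' ?_ s3
      filter_upwards [self_mem_nhdsWithin] with z hz
      have hz0 : (z:ℝ) ≠ 0 := ne_of_gt hz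
      rw [slope_def_field, slope_def_field]
      have e1 : w0 + z - w0 = z := by ring
      have e2 : w0 - z - w0 = -z := by ring
      rw [e1, e2]
      have hgen : ∀ P Q R : ℝ, ((P - R) / z + (Q - R) / (-z)) / 2 = (P - Q) / (2 * z) := by
        intro P Q R
        field_simp [hz0]
        ring
      exact hgen _ _ _
    rw [htarget]
    exact le_of_tendsto stepB (eventually_nhdsWithin_of_forall (fun h hh => stepA h hh))


end BirkhoffTransposeAux

/-- The Birkhoff contraction coefficient of the transpose equals that of the matrix:
`τ(Mᵀ) = τ(M)` for entrywise positive `M`. -/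
theorem birkhoff_transpose
    {K : ℕ} (hK : 0 < K)
    (M : Matrix (Fin K) (Fin K) ℝ) (hM_pos : ∀ i j, 0 < M i j) :
    birkhoff (Matrix.transpose M) = birkhoff M := by
  classical
  open BirkhoffTransposeAux in
  have hMT : ∀ i j, 0 < Matrix.transpose M i j := fun i j => hM_pos j i
  have h1 : birkhoff M = (Real.sqrt (crMax M) - 1) / (Real.sqrt (crMax M) + 1) :=
    le_antisymm (birkhoff_le hK M hM_pos) (le_birkhoff hK M hM_pos)
  have h2 : birkhoff (Matrix.transpose M)
      = (Real.sqrt (crMax (Matrix.transpose M)) - 1) / (Real.sqrt (crMax (Matrix.transpose M)) + 1) :=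
    le_antisymm (birkhoff_le hK (Matrix.transpose M) hMT) (le_birkhoff hK (Matrix.transpose M) hMT)
  rw [h1, h2, crMax_transpose hK M]
end

section
/- (Deterministic exponential forgetting.) Let M be an entrywise positive K×K row-stochastic matrix and let D_1, …, D_n be diagonal matrices with strictly positive diagonal entries. Then for any two interior probability row vectors p, p' ∈ ℝ^K, d(p M D_1 M D_2 ⋯ M D_n, p' M D_1 M D_2 ⋯ M D_n) ≤ τ(M)^n · d(p, p'), where d is the Hilbert projective metric and τ(M) < 1 is the Birkhoff contraction coefficient of M. In particular the Hilbert distance between the two filtered trajectories decays geometrically at rate τ(M), uniformly over the choice of the positive diagonal matrices D_i. -/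
/-- The matrix products `P_n = M D₁ M D₂ ⋯ M D_n` built from `M` and the positive diagonal
matrices `D₁, D₂, …` (here `D n` is the diagonal of the `(n+1)`-st factor). -/
noncomputable def filterProd {K : ℕ} (M : Matrix (Fin K) (Fin K) ℝ)
    (D : ℕ → Fin K → ℝ) : ℕ → Matrix (Fin K) (Fin K) ℝ
  | 0 => 1
  | n + 1 => filterProd M D n * (M * Matrix.diagonal (D n))

open Real Matrix Finset

section Aux

variable {K : ℕ}

lemma exists_max_fin [Nonempty (Fin K)] (f : Fin K → ℝ) :
    ∃ i, (∀ j, f j ≤ f i) ∧ (⨆ j, f j) = f i := by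
  obtain ⟨i, hi⟩ := Finite.exists_max f
  exact ⟨i, hi, le_antisymm (ciSup_le hi) (le_ciSup (Finite.bddAbove_range f) i)⟩

lemma exists_min_fin [Nonempty (Fin K)] (f : Fin K → ℝ) :
    ∃ i, (∀ j, f i ≤ f j) ∧ (⨅ j, f j) = f i := by
  obtain ⟨i, hi⟩ := Finite.exists_min f
  exact ⟨i, hi, le_antisymm (ciInf_le (Finite.bddBelow_range f) i) (le_ciInf hi)⟩

lemma vecMul_eq_sum' (x : Fin K → ℝ) (M : Matrix (Fin K) (Fin K) ℝ) (j : Fin K) :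
    Matrix.vecMul x M j = ∑ i, x i * M i j := by simp [Matrix.vecMul, dotProduct]

lemma vecMul_pos {x : Fin K → ℝ} {M : Matrix (Fin K) (Fin K) ℝ}
    (hx : ∀ i, 0 < x i) (hM : ∀ i j, 0 < M i j) : ∀ j, 0 < Matrix.vecMul x M j := by
  intro j
  have : Nonempty (Fin K) := ⟨j⟩
  rw [vecMul_eq_sum']
  exact Finset.sum_pos (fun i _ => mul_pos (hx i) (hM i j)) Finset.univ_nonempty

lemma hilbertDist_nonneg' [Nonempty (Fin K)] {x y : Fin K → ℝ}
    (hx : ∀ i, 0 < x i) (hy : ∀ i, 0 < y i) : 0 ≤ hilbertDist x y := by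
  obtain ⟨imax, hmax, hsup⟩ := exists_max_fin (fun i => x i / y i)
  obtain ⟨imin, hmin, hinf⟩ := exists_min_fin (fun i => x i / y i)
  unfold hilbertDist
  have hsup' : (⨆ i, x i / y i) = x imax / y imax := hsup
  have hinf' : (⨅ i, x i / y i) = x imin / y imin := hinf
  rw [hsup', hinf']
  apply Real.log_nonneg
  rw [le_div_iff₀ (div_pos (hx imin) (hy imin)), one_mul]
  exact hmin imax

lemma hilbertDist_vecMul_diagonal {x y d : Fin K → ℝ} (hd : ∀ i, d i ≠ 0) :
    hilbertDist (Matrix.vecMul x (Matrix.diagonal d)) (Matrix.vecMul y (Matrix.diagonal d))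
      = hilbertDist x y := by
  unfold hilbertDist
  have h : ∀ i, Matrix.vecMul x (Matrix.diagonal d) i / Matrix.vecMul y (Matrix.diagonal d) i
      = x i / y i := by
    intro i
    rw [Matrix.vecMul_diagonal, Matrix.vecMul_diagonal, mul_div_mul_right _ _ (hd i)]
  rw [iSup_congr h, iInf_congr h]

lemma contraction (hK : 0 < K) (M : Matrix (Fin K) (Fin K) ℝ)
    {m : ℝ} (hm : 0 < m) (hm1 : m ≤ 1) (hml : ∀ i j, m ≤ M i j) (hmu : ∀ i j, M i j ≤ 1)
    {x y : Fin K → ℝ} (hx : ∀ i, 0 < x i) (hy : ∀ i, 0 < y i) :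
    hilbertDist (Matrix.vecMul x M) (Matrix.vecMul y M) ≤ (1 - m ^ 2) * hilbertDist x y := by
  have hne : Nonempty (Fin K) := ⟨⟨0, hK⟩⟩
  have hMpos : ∀ i j, 0 < M i j := fun i j => lt_of_lt_of_le hm (hml i j)
  set r : Fin K → ℝ := fun i => x i / y i with hrdef
  have hrpos : ∀ i, 0 < r i := fun i => div_pos (hx i) (hy i)
  set l : Fin K → ℝ := fun i => Real.log (r i) with hldef
  obtain ⟨imax, hmax, hsup⟩ := exists_max_fin r
  obtain ⟨imin, hmin, hinf⟩ := exists_min_fin r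
  set L : ℝ := l imax - l imin with hLdef
  have hli : ∀ i, l i ≤ l imax := fun i => Real.log_le_log (hrpos i) (hmax i)
  have hli' : ∀ i, l imin ≤ l i := fun i => Real.log_le_log (hrpos imin) (hmin i)
  have hL : hilbertDist x y = L := by
    unfold hilbertDist
    rw [show (⨆ i, x i / y i) = r imax from hsup, show (⨅ i, x i / y i) = r imin from hinf,
      Real.log_div (hrpos imax).ne' (hrpos imin).ne']
  set S : Fin K → ℝ → ℝ := fun j t => ∑ i, (y i * M i j) * Real.exp (t * l i) with hSdef
  have hSpos : ∀ j t, 0 < S j t :=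
    fun j t => Finset.sum_pos (fun i _ => mul_pos (mul_pos (hy i) (hMpos i j))
      (Real.exp_pos _)) Finset.univ_nonempty
  have hS1 : ∀ j, S j 1 = Matrix.vecMul x M j := by
    intro j
    rw [vecMul_eq_sum']
    refine Finset.sum_congr rfl fun i _ => ?_
    have he : Real.exp (1 * l i) = x i / y i := by
      rw [one_mul]; exact Real.exp_log (hrpos i)
    show (y i * M i j) * Real.exp (1 * l i) = x i * M i j
    rw [he]
    field_simp [(hy i).ne']
  have hS0 : ∀ j, S j 0 = Matrix.vecMul y M j := by
    intro j
    rw [vecMul_eq_sum']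
    refine Finset.sum_congr rfl fun i _ => ?_
    show (y i * M i j) * Real.exp (0 * l i) = y i * M i j
    simp
  set T : ℝ → ℝ := fun t => ∑ i, y i * Real.exp (t * l i) with hTdef
  have hST1 : ∀ j t, S j t ≤ T t := by
    intro j t
    refine Finset.sum_le_sum fun i _ => ?_
    show (y i * M i j) * Real.exp (t * l i) ≤ y i * Real.exp (t * l i)
    nlinarith [mul_nonneg (mul_pos (hy i) (Real.exp_pos (t * l i))).le
      (sub_nonneg.2 (hmu i j))]
  have hST2 : ∀ j t, m * T t ≤ S j t := by
    intro j t
    show m * (∑ i, y i * Real.exp (t * l i)) ≤ ∑ i, (y i * M i j) * Real.exp (t * l i)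
    rw [Finset.mul_sum]
    refine Finset.sum_le_sum fun i _ => ?_
    nlinarith [mul_nonneg (mul_pos (hy i) (Real.exp_pos (t * l i))).le
      (sub_nonneg.2 (hml i j))]
  -- the key pairwise bound
  have key : ∀ j k : Fin K,
      (Real.log (S j 1) - Real.log (S k 1)) - (Real.log (S j 0) - Real.log (S k 0))
        ≤ (1 - m ^ 2) * L := by
    intro j k
    set F : ℝ → ℝ := fun t => (1 - m^2) * L * t - (Real.log (S j t) - Real.log (S k t))
      with hFdef
    have hSderiv : ∀ (j' : Fin K) (t : ℝ),
        HasDerivAt (S j') (∑ i, (y i * M i j') * (Real.exp (t * l i) * l i)) t := by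
      intro j' t
      refine HasDerivAt.fun_sum fun i _ => ?_
      exact ((hasDerivAt_mul_const (l i)).exp).const_mul (y i * M i j')
    have hFderiv : ∀ t : ℝ,
        HasDerivAt F ((1 - m^2) * L -
          ((∑ i, (y i * M i j) * (Real.exp (t * l i) * l i)) / S j t -
           (∑ i, (y i * M i k) * (Real.exp (t * l i) * l i)) / S k t)) t := by
      intro t
      have h1 : HasDerivAt (fun t : ℝ => (1 - m^2) * L * t) ((1 - m^2) * L) t := by
        simpa using (hasDerivAt_id t).const_mul ((1 - m^2) * L)
      exact h1.sub (((hSderiv j t).log (hSpos j t).ne').sub ((hSderiv k t).log (hSpos k t).ne'))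
    have hbound : ∀ t : ℝ,
        (∑ i, (y i * M i j) * (Real.exp (t * l i) * l i)) / S j t -
          (∑ i, (y i * M i k) * (Real.exp (t * l i) * l i)) / S k t ≤ (1 - m^2) * L := by
      intro t
      set p : Fin K → ℝ := fun i => (y i * M i j) * Real.exp (t * l i) / S j t with hpdef
      set q : Fin K → ℝ := fun i => (y i * M i k) * Real.exp (t * l i) / S k t with hqdef
      have hpsum : ∑ i, p i = 1 := by
        show (∑ i, (y i * M i j) * Real.exp (t * l i) / S j t) = 1
        rw [← Finset.sum_div, div_eq_one_iff_eq (hSpos j t).ne']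
      have hqsum : ∑ i, q i = 1 := by
        show (∑ i, (y i * M i k) * Real.exp (t * l i) / S k t) = 1
        rw [← Finset.sum_div, div_eq_one_iff_eq (hSpos k t).ne']
      have hqnn : ∀ i, 0 ≤ q i := fun i =>
        div_nonneg (mul_nonneg (mul_nonneg (hy i).le (hMpos i k).le) (Real.exp_pos _).le)
          (hSpos k t).le
      have hpq : ∀ i, m^2 * q i ≤ p i := by
        intro i
        show m^2 * ((y i * M i k) * Real.exp (t * l i) / S k t)
          ≤ (y i * M i j) * Real.exp (t * l i) / S j t
        rw [← mul_div_assoc, div_le_div_iff₀ (hSpos k t) (hSpos j t)]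
        have h1 : m * S j t ≤ S k t :=
          le_trans (mul_le_mul_of_nonneg_left (hST1 j t) hm.le) (hST2 k t)
        have hmM : m * M i k ≤ M i j := by
          nlinarith [hmu i k, hml i j, hm]
        have h2 : m * ((y i * M i k) * Real.exp (t * l i))
            ≤ (y i * M i j) * Real.exp (t * l i) := by
          nlinarith [mul_le_mul_of_nonneg_right hmM
            (mul_pos (hy i) (Real.exp_pos (t * l i))).le]
        calc m^2 * ((y i * M i k) * Real.exp (t * l i)) * S j t
            = (m * ((y i * M i k) * Real.exp (t * l i))) * (m * S j t) := by ring
          _ ≤ ((y i * M i j) * Real.exp (t * l i)) * S k t :=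
              mul_le_mul h2 h1
                (mul_nonneg hm.le (hSpos j t).le)
                (mul_nonneg (mul_nonneg (hy i).le (hMpos i j).le) (Real.exp_pos _).le)
      have hrw1 : (∑ i, (y i * M i j) * (Real.exp (t * l i) * l i)) / S j t
          = ∑ i, p i * l i := by
        rw [Finset.sum_div]
        refine Finset.sum_congr rfl fun i _ => ?_
        show (y i * M i j) * (Real.exp (t * l i) * l i) / S j t
          = (y i * M i j) * Real.exp (t * l i) / S j t * l i
        ring
      have hrw2 : (∑ i, (y i * M i k) * (Real.exp (t * l i) * l i)) / S k t
          = ∑ i, q i * l i := by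
        rw [Finset.sum_div]
        refine Finset.sum_congr rfl fun i _ => ?_
        show (y i * M i k) * (Real.exp (t * l i) * l i) / S k t
          = (y i * M i k) * Real.exp (t * l i) / S k t * l i
        ring
      rw [hrw1, hrw2]
      have e1 : ∑ i, p i * l i - ∑ i, q i * l i
          = (∑ i, (p i - m^2 * q i) * l i) - (1 - m^2) * (∑ i, q i * l i) := by
        rw [Finset.mul_sum, ← Finset.sum_sub_distrib, ← Finset.sum_sub_distrib]
        exact Finset.sum_congr rfl fun i _ => by ring
      have h1 : ∑ i, (p i - m^2 * q i) * l i ≤ ∑ i, (p i - m^2 * q i) * l imax :=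
        Finset.sum_le_sum fun i _ =>
          mul_le_mul_of_nonneg_left (hli i) (sub_nonneg.2 (hpq i))
      have h2 : ∑ i, (p i - m^2 * q i) * l imax = (1 - m^2) * l imax := by
        rw [← Finset.sum_mul, Finset.sum_sub_distrib, hpsum, ← Finset.mul_sum, hqsum, mul_one]
      have h3 : l imin ≤ ∑ i, q i * l i := by
        calc l imin = (∑ i, q i) * l imin := by rw [hqsum, one_mul]
        _ = ∑ i, q i * l imin := by rw [Finset.sum_mul]
        _ ≤ ∑ i, q i * l i := Finset.sum_le_sum fun i _ =>
            mul_le_mul_of_nonneg_left (hli' i) (hqnn i)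
      have hm2 : (0:ℝ) ≤ 1 - m^2 := by nlinarith
      have h4 : (1 - m^2) * l imin ≤ (1 - m^2) * ∑ i, q i * l i :=
        mul_le_mul_of_nonneg_left h3 hm2
      rw [e1, hLdef]
      have h5 := h2 ▸ h1
      linarith
    have hmono : Monotone F :=
      monotone_of_deriv_nonneg (fun t => (hFderiv t).differentiableAt)
        (fun t => by rw [(hFderiv t).deriv]; linarith [hbound t])
    have h01 : F 0 ≤ F 1 := hmono zero_le_one
    have e0 : F 0 = -(Real.log (S j 0) - Real.log (S k 0)) := by
      show (1 - m^2) * L * 0 - (Real.log (S j 0) - Real.log (S k 0)) = _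
      ring
    have e11 : F 1 = (1 - m^2) * L - (Real.log (S j 1) - Real.log (S k 1)) := by
      show (1 - m^2) * L * 1 - (Real.log (S j 1) - Real.log (S k 1)) = _
      ring
    rw [e0, e11] at h01
    linarith
  -- assemble
  obtain ⟨jmax, hjmax, hjsup⟩ :=
    exists_max_fin (fun j => Matrix.vecMul x M j / Matrix.vecMul y M j)
  obtain ⟨kmin, hkmin, hkinf⟩ :=
    exists_min_fin (fun j => Matrix.vecMul x M j / Matrix.vecMul y M j)
  rw [hL]
  unfold hilbertDist
  have hjsup' : (⨆ i, Matrix.vecMul x M i / Matrix.vecMul y M i)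
      = Matrix.vecMul x M jmax / Matrix.vecMul y M jmax := hjsup
  have hkinf' : (⨅ i, Matrix.vecMul x M i / Matrix.vecMul y M i)
      = Matrix.vecMul x M kmin / Matrix.vecMul y M kmin := hkinf
  rw [hjsup', hkinf']
  have e1 : Matrix.vecMul x M jmax / Matrix.vecMul y M jmax = S jmax 1 / S jmax 0 := by
    rw [hS1, hS0]
  have e2 : Matrix.vecMul x M kmin / Matrix.vecMul y M kmin = S kmin 1 / S kmin 0 := by
    rw [hS1, hS0]
  rw [e1, e2,
    Real.log_div (div_pos (hSpos _ _) (hSpos _ _)).ne' (div_pos (hSpos _ _) (hSpos _ _)).ne',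
    Real.log_div (hSpos _ _).ne' (hSpos _ _).ne', Real.log_div (hSpos _ _).ne' (hSpos _ _).ne']
  linarith [key jmax kmin]

end Aux

/-- Deterministic exponential forgetting: for an entrywise positive row-stochastic matrix
`M`, any positive diagonal matrices `D₁, …, D_n`, and any interior probability vectors
`p, p'`, we have `d(p M D₁ ⋯ M D_n, p' M D₁ ⋯ M D_n) ≤ τ(M)^n d(p, p')`, with
`τ(M) < 1`. -/
theorem deterministic_exponential_forgetting
    {K : ℕ} (hK : 0 < K)
    (M : Matrix (Fin K) (Fin K) ℝ) (hM_pos : ∀ i j, 0 < M i j)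
    (hM_rowstoch : ∀ i, ∑ j, M i j = 1)
    (D : ℕ → Fin K → ℝ) (hD_pos : ∀ n i, 0 < D n i)
    (p p' : Fin K → ℝ)
    (hp_pos : ∀ i, 0 < p i) (hp_sum : ∑ i, p i = 1)
    (hp'_pos : ∀ i, 0 < p' i) (hp'_sum : ∑ i, p' i = 1) :
    birkhoff M < 1 ∧
      ∀ n : ℕ,
        hilbertDist (Matrix.vecMul p (filterProd M D n))
            (Matrix.vecMul p' (filterProd M D n)) ≤
          birkhoff M ^ n * hilbertDist p p' := by
  have hne : Nonempty (Fin K) := ⟨⟨0, hK⟩⟩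
  obtain ⟨⟨i0, j0⟩, h0⟩ := Finite.exists_min (fun pr : Fin K × Fin K => M pr.1 pr.2)
  set m : ℝ := M i0 j0 with hmdef
  have hml : ∀ i j, m ≤ M i j := fun i j => h0 (i, j)
  have hmpos : 0 < m := hM_pos i0 j0
  have hmu : ∀ i j, M i j ≤ 1 := by
    intro i j
    calc M i j ≤ ∑ k, M i k :=
          Finset.single_le_sum (fun k _ => (hM_pos i k).le) (Finset.mem_univ j)
      _ = 1 := hM_rowstoch i
  have hm1 : m ≤ 1 := hmu i0 j0
  set c : ℝ := 1 - m ^ 2 with hcdef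
  have hc0 : 0 ≤ c := by nlinarith
  have hc1 : c < 1 := by nlinarith
  have hcontr : ∀ x y : Fin K → ℝ, (∀ i, 0 < x i) → (∀ i, 0 < y i) →
      hilbertDist (Matrix.vecMul x M) (Matrix.vecMul y M) ≤ c * hilbertDist x y :=
    fun x y hx hy => contraction hK M hmpos hm1 hml hmu hx hy
  set Sset : Set ℝ := {t : ℝ | ∃ x y : Fin K → ℝ, (∀ i, 0 < x i) ∧ (∀ i, 0 < y i) ∧
    0 < hilbertDist x y ∧
    t = hilbertDist (Matrix.vecMul x M) (Matrix.vecMul y M) / hilbertDist x y} with hSsetdef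
  have hbM : birkhoff M = sSup Sset := rfl
  have hbdd : ∀ t ∈ Sset, t ≤ c := by
    rintro t ⟨x, y, hx, hy, hd, rfl⟩
    rw [div_le_iff₀ hd]
    exact hcontr x y hx hy
  have hτc : birkhoff M ≤ c := by
    rw [hbM]
    exact Real.sSup_le hbdd hc0
  have hτ1 : birkhoff M < 1 := lt_of_le_of_lt hτc hc1
  have hτ0 : 0 ≤ birkhoff M := by
    rw [hbM]
    apply Real.sSup_nonneg
    rintro t ⟨x, y, hx, hy, hd, rfl⟩
    exact div_nonneg (hilbertDist_nonneg' (vecMul_pos hx hM_pos) (vecMul_pos hy hM_pos)) hd.le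
  refine ⟨hτ1, ?_⟩
  have key : ∀ q q' : Fin K → ℝ, (∀ i, 0 < q i) → (∀ i, 0 < q' i) →
      hilbertDist (Matrix.vecMul q M) (Matrix.vecMul q' M)
        ≤ birkhoff M * hilbertDist q q' := by
    intro q q' hq hq'
    rcases eq_or_lt_of_le (hilbertDist_nonneg' hq hq') with h | h
    · have h2 := hcontr q q' hq hq'
      rw [← h] at h2 ⊢
      simpa using h2
    · have hmem : hilbertDist (Matrix.vecMul q M) (Matrix.vecMul q' M) / hilbertDist q q'
          ∈ Sset := ⟨q, q', hq, hq', h, rfl⟩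
      have hbdd' : BddAbove Sset := ⟨c, fun t ht => hbdd t ht⟩
      have h3 : hilbertDist (Matrix.vecMul q M) (Matrix.vecMul q' M) / hilbertDist q q'
          ≤ birkhoff M := by
        rw [hbM]; exact le_csSup hbdd' hmem
      rw [div_le_iff₀ h] at h3
      exact h3
  have hpos : ∀ (q : Fin K → ℝ), (∀ i, 0 < q i) → ∀ n i,
      0 < Matrix.vecMul q (filterProd M D n) i := by
    intro q hq n
    induction n with
    | zero =>
      show ∀ i, 0 < Matrix.vecMul q (1 : Matrix (Fin K) (Fin K) ℝ) i
      rw [Matrix.vecMul_one]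
      exact hq
    | succ n ih =>
      show ∀ i, 0 < Matrix.vecMul q (filterProd M D n * (M * Matrix.diagonal (D n))) i
      intro i
      rw [← Matrix.vecMul_vecMul, ← Matrix.vecMul_vecMul, Matrix.vecMul_diagonal]
      exact mul_pos (vecMul_pos ih hM_pos i) (hD_pos n i)
  intro n
  induction n with
  | zero =>
    show hilbertDist (Matrix.vecMul p 1) (Matrix.vecMul p' 1) ≤ _
    rw [Matrix.vecMul_one, Matrix.vecMul_one, pow_zero, one_mul]
  | succ n ih =>
    have hq := hpos p hp_pos n
    have hq' := hpos p' hp'_pos n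
    have step1 : Matrix.vecMul p (filterProd M D (n + 1))
        = Matrix.vecMul (Matrix.vecMul (Matrix.vecMul p (filterProd M D n)) M)
            (Matrix.diagonal (D n)) := by
      show Matrix.vecMul p (filterProd M D n * (M * Matrix.diagonal (D n))) = _
      rw [← Matrix.vecMul_vecMul, ← Matrix.vecMul_vecMul]
    have step1' : Matrix.vecMul p' (filterProd M D (n + 1))
        = Matrix.vecMul (Matrix.vecMul (Matrix.vecMul p' (filterProd M D n)) M)
            (Matrix.diagonal (D n)) := by
      show Matrix.vecMul p' (filterProd M D n * (M * Matrix.diagonal (D n))) = _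
      rw [← Matrix.vecMul_vecMul, ← Matrix.vecMul_vecMul]
    rw [step1, step1', hilbertDist_vecMul_diagonal (fun i => (hD_pos n i).ne')]
    calc hilbertDist (Matrix.vecMul (Matrix.vecMul p (filterProd M D n)) M)
          (Matrix.vecMul (Matrix.vecMul p' (filterProd M D n)) M)
        ≤ birkhoff M * hilbertDist (Matrix.vecMul p (filterProd M D n))
            (Matrix.vecMul p' (filterProd M D n)) := key _ _ hq hq'
      _ ≤ birkhoff M * (birkhoff M ^ n * hilbertDist p p') :=
          mul_le_mul_of_nonneg_left ih hτ0
      _ = birkhoff M ^ (n + 1) * hilbertDist p p' := by ring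
end

section
/- For any two interior probability vectors x, y ∈ ℝ^K, the sup-norm distance is controlled by the Hilbert projective metric: ‖x − y‖_∞ ≤ exp(d(x,y)) − 1. Hence convergence to zero in the Hilbert projective metric implies convergence to zero in norm for probability vectors. -/
/-- For interior probability vectors, the sup-norm distance is controlled by the Hilbert
projective metric: `‖x − y‖_∞ ≤ exp (d(x,y)) − 1`. -/
theorem supnorm_le_exp_hilbertDist_sub_one
    {K : ℕ} (hK : 0 < K)
    (x y : Fin K → ℝ)
    (hx_pos : ∀ i, 0 < x i) (hx_sum : ∑ i, x i = 1)
    (hy_pos : ∀ i, 0 < y i) (hy_sum : ∑ i, y i = 1) :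
    ‖x - y‖ ≤ Real.exp (hilbertDist x y) - 1 := by
  haveI : Nonempty (Fin K) := ⟨⟨0, hK⟩⟩
  set f : Fin K → ℝ := fun i => x i / y i with hf
  have hfpos : ∀ i, 0 < f i := fun i => div_pos (hx_pos i) (hy_pos i)
  set M := ⨆ i, f i with hM
  set m := ⨅ i, f i with hm
  have hbdd : BddAbove (Set.range f) := (Set.finite_range f).bddAbove
  have hbddb : BddBelow (Set.range f) := (Set.finite_range f).bddBelow
  have hleM : ∀ i, f i ≤ M := fun i => le_ciSup hbdd i
  have hmle : ∀ i, m ≤ f i := fun i => ciInf_le hbddb i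
  -- m > 0
  obtain ⟨i0, hi0⟩ := Finite.exists_min f
  have hmpos : 0 < m := lt_of_lt_of_le (hfpos i0) (le_ciInf hi0)
  -- exists i with x i ≤ y i, hence m ≤ 1
  have hm1 : m ≤ 1 := by
    by_contra h
    push_neg at h
    have : ∀ i, y i < x i := by
      intro i
      have := lt_of_lt_of_le h (hmle i)
      calc y i = y i * 1 := (mul_one _).symm
        _ < y i * f i := by exact mul_lt_mul_of_pos_left this (hy_pos i)
        _ = x i := by show y i * (x i / y i) = x i; field_simp [(hy_pos i).ne']
    have : (1:ℝ) < 1 := by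
      calc (1:ℝ) = ∑ i, y i := hy_sum.symm
        _ < ∑ i, x i := Finset.sum_lt_sum_of_nonempty Finset.univ_nonempty (fun i _ => this i)
        _ = 1 := hx_sum
    exact lt_irrefl _ this
  -- exists i with y i ≤ x i, hence 1 ≤ M
  have hM1 : (1:ℝ) ≤ M := by
    by_contra h
    push_neg at h
    have : ∀ i, x i < y i := by
      intro i
      have := lt_of_le_of_lt (hleM i) h
      calc x i = y i * f i := by show x i = y i * (x i / y i); field_simp [(hy_pos i).ne']
        _ < y i * 1 := mul_lt_mul_of_pos_left this (hy_pos i)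
        _ = y i := mul_one _
    have : (1:ℝ) < 1 := by
      calc (1:ℝ) = ∑ i, x i := hx_sum.symm
        _ < ∑ i, y i := Finset.sum_lt_sum_of_nonempty Finset.univ_nonempty (fun i _ => this i)
        _ = 1 := hy_sum
    exact lt_irrefl _ this
  have hMpos : 0 < M := lt_of_lt_of_le one_pos hM1
  have hratio : (1:ℝ) ≤ M / m := (one_le_div hmpos).mpr (hm1.trans hM1)
  have hexp : Real.exp (hilbertDist x y) = M / m := by
    rw [hilbertDist, Real.exp_log (div_pos hMpos hmpos)]
  rw [hexp]
  have hy1 : ∀ i, y i ≤ 1 := by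
    intro i
    rw [← hy_sum]
    exact Finset.single_le_sum (fun j _ => (hy_pos j).le) (Finset.mem_univ i)
  have key : ∀ i, |x i - y i| ≤ M / m - 1 := by
    intro i
    rw [abs_le]
    have hxi : x i = y i * f i := by show x i = y i * (x i / y i); field_simp [(hy_pos i).ne']
    constructor
    · -- y i - x i ≤ 1 - m ≤ 1/m - 1 ≤ M/m - 1
      have h1 : y i - x i ≤ 1 - m := by
        have : y i * m ≤ x i := by
          rw [hxi]; exact mul_le_mul_of_nonneg_left (hmle i) (hy_pos i).le
        nlinarith [hy1 i, hmpos, hy_pos i]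
      have h2 : 1 - m ≤ M / m - 1 := by
        rw [div_sub' hmpos.ne', le_div_iff₀ hmpos]
        nlinarith
      linarith
    · -- x i - y i ≤ M - 1 ≤ M/m - 1
      have h1 : x i - y i ≤ M - 1 := by
        have : x i ≤ y i * M := by
          rw [hxi]; exact mul_le_mul_of_nonneg_left (hleM i) (hy_pos i).le
        nlinarith [hy1 i, hM1, hy_pos i]
      have h2 : M ≤ M / m := by
        rw [le_div_iff₀ hmpos]
        nlinarith
      linarith
  rw [pi_norm_le_iff_of_nonneg (by linarith)]
  intro i
  simpa [Real.norm_eq_abs] using key i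
end
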